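/- arXiv:2108.06974 — 4 statements merged into one kernel-verified Lean document; each statement's English description precedes it below -/
import Mathlib

section
/- There exists η > 0 with the following property. Suppose u₀ : ℝ³ → ℝ⁴ is a bounded measurable function such that u₀(ξ)₁ = u₀(ξ)₂ = u₀(ξ)₃ = 0 for all |ξ| ≤ η, and there exist constants c₀ > 0, s > 0 and M > 0 with |u₀(ξ)₄ − c₀| ≤ M |ξ|^s for all |ξ| ≤ η. Then there exist C₁ > 0 and T > 0 such that for all t ≥ T and for each i ∈ {1, 3}: ( ∫_{|ξ| ≤ η} |(exp(t A₁(|ξ|)) u₀(ξ))ᵢ|² dξ )^{1/2} ≥ C₁ c₀ (1+t)^{−1/4}. -/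
open Matrix MeasureTheory

/-- The Fourier-side Green matrix `A₁(r)` of the linearized two-fluid
Navier–Stokes–Korteweg system. -/
noncomputable def A1 (β₁ β₂ β₃ β₄ σp σm νp νm r : ℝ) : Matrix (Fin 4) (Fin 4) ℝ :=
  !![0, -r, 0, 0;
     β₁ * r + σp * r ^ 3, -νp * r ^ 2, β₂ * r, 0;
     0, 0, 0, -r;
     β₃ * r, 0, β₄ * r + σm * r ^ 3, -νm * r ^ 2]

noncomputable def solfn (A : Matrix (Fin 4) (Fin 4) ℝ) (v : Fin 4 → ℝ) (t : ℝ) : Fin 4 → ℝ :=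
  (NormedSpace.exp (t • A)).mulVec v

lemma A1_decomp (β₁ β₂ β₃ β₄ σp σm νp νm r : ℝ) :
    A1 β₁ β₂ β₃ β₄ σp σm νp νm r
      = r • !![0, -1, 0, 0; β₁, 0, β₂, 0; 0, 0, 0, -1; β₃, 0, β₄, 0]
        + r ^ 2 • !![0, 0, 0, 0; 0, -νp, 0, 0; 0, 0, 0, 0; 0, 0, 0, -νm]
        + r ^ 3 • !![0, 0, 0, 0; σp, 0, 0, 0; 0, 0, 0, 0; 0, 0, σm, 0] := by
  ext i j
  fin_cases i <;> fin_cases j <;>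
    simp [A1, Matrix.vecHead, Matrix.vecTail] <;> ring

lemma A1_mulVec (β₁ β₂ β₃ β₄ σp σm νp νm r : ℝ) (y : Fin 4 → ℝ) :
    (A1 β₁ β₂ β₃ β₄ σp σm νp νm r).mulVec y
      = ![ -r * y 1,
           (β₁ * r + σp * r ^ 3) * y 0 - νp * r ^ 2 * y 1 + β₂ * r * y 2,
           -r * y 3,
           β₃ * r * y 0 + (β₄ * r + σm * r ^ 3) * y 2 - νm * r ^ 2 * y 3 ] := by
  funext i
  fin_cases i <;>
    simp [A1, Matrix.mulVec, dotProduct, Fin.sum_univ_four] <;> ring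

section NormInstances

attribute [local instance] Matrix.linftyOpNormedAddCommGroup Matrix.linftyOpNormedRing
  Matrix.linftyOpNormedAlgebra

lemma solfn_hasDerivAt (A : Matrix (Fin 4) (Fin 4) ℝ) (v : Fin 4 → ℝ) (i : Fin 4) (t : ℝ) :
    HasDerivAt (fun τ => solfn A v τ i) (A.mulVec (solfn A v t) i) t := by
  have h := hasDerivAt_exp_smul_const' A t
  let L : Matrix (Fin 4) (Fin 4) ℝ →ₗ[ℝ] ℝ :=
    { toFun := fun M => M.mulVec v i
      map_add' := by intro M N; simp [Matrix.add_mulVec]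
      map_smul' := by intro c M; simp [Matrix.smul_mulVec] }
  have hc := (L.toContinuousLinearMap).hasFDerivAt.comp_hasDerivAt t h
  refine hc.congr_deriv ?_
  simp [L, solfn, Matrix.mulVec_mulVec]
  rfl

lemma solfn_zero (A : Matrix (Fin 4) (Fin 4) ℝ) (v : Fin 4 → ℝ) : solfn A v 0 = v := by
  simp [solfn, NormedSpace.exp_zero]

lemma solfn_cont_in_r (β₁ β₂ β₃ β₄ σp σm νp νm t : ℝ) (v : Fin 4 → ℝ) (i : Fin 4) :
    Continuous (fun r : ℝ => solfn (A1 β₁ β₂ β₃ β₄ σp σm νp νm r) v t i) := by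
  have hA : Continuous (fun r : ℝ => t • A1 β₁ β₂ β₃ β₄ σp σm νp νm r) := by
    simp only [A1_decomp]
    fun_prop
  have hexp : Continuous (fun r : ℝ =>
      NormedSpace.exp (t • A1 β₁ β₂ β₃ β₄ σp σm νp νm r)) :=
    NormedSpace.exp_continuous.comp hA
  let L : Matrix (Fin 4) (Fin 4) ℝ →ₗ[ℝ] ℝ :=
    { toFun := fun M => M.mulVec v i
      map_add' := by intro M N; simp [Matrix.add_mulVec]
      map_smul' := by intro c M; simp [Matrix.smul_mulVec] }
  exact (L.toContinuousLinearMap).continuous.comp hexp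

/-- norm of exp(tA) is bounded for r in a compact set -/
lemma solfn_bound (β₁ β₂ β₃ β₄ σp σm νp νm t : ℝ) :
    ∃ C : ℝ, 0 ≤ C ∧ ∀ r ∈ Set.Icc (0:ℝ) 1, ∀ v : Fin 4 → ℝ, ∀ i : Fin 4,
      |solfn (A1 β₁ β₂ β₃ β₄ σp σm νp νm r) v t i| ≤ C * ‖v‖ := by
  have hA : Continuous (fun r : ℝ => t • A1 β₁ β₂ β₃ β₄ σp σm νp νm r) := by
    simp only [A1_decomp]; fun_prop
  have hexp : Continuous (fun r : ℝ =>
      NormedSpace.exp (t • A1 β₁ β₂ β₃ β₄ σp σm νp νm r)) :=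
    NormedSpace.exp_continuous.comp hA
  obtain ⟨C, hC⟩ := (isCompact_Icc (a := (0:ℝ)) (b := 1)).exists_bound_of_continuousOn
    hexp.continuousOn
  refine ⟨max C 0, le_max_right _ _, fun r hr v i => ?_⟩
  have h1 : |solfn (A1 β₁ β₂ β₃ β₄ σp σm νp νm r) v t i|
      ≤ ‖(NormedSpace.exp (t • A1 β₁ β₂ β₃ β₄ σp σm νp νm r)).mulVec v‖ := by
    simpa [solfn] using norm_le_pi_norm (f := (NormedSpace.exp (t • A1 β₁ β₂ β₃ β₄ σp σm νp νm r)).mulVec v) i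
  refine h1.trans ?_
  refine (Matrix.linfty_opNorm_mulVec _ _).trans ?_
  exact mul_le_mul_of_nonneg_right ((hC r hr).trans (le_max_left _ _)) (norm_nonneg _)


lemma solfn_entry_cont (β₁ β₂ β₃ β₄ σp σm νp νm t : ℝ) (i j : Fin 4) :
    Continuous (fun rr : ℝ => (NormedSpace.exp (t • A1 β₁ β₂ β₃ β₄ σp σm νp νm rr)) i j) := by
  have hA : Continuous (fun rr : ℝ => t • A1 β₁ β₂ β₃ β₄ σp σm νp νm rr) := by
    simp only [A1_decomp]; fun_prop
  have hexp : Continuous (fun rr : ℝ =>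
      NormedSpace.exp (t • A1 β₁ β₂ β₃ β₄ σp σm νp νm rr)) :=
    NormedSpace.exp_continuous.comp hA
  let L : Matrix (Fin 4) (Fin 4) ℝ →ₗ[ℝ] ℝ :=
    { toFun := fun M => M i j
      map_add' := by intro M N; rfl
      map_smul' := by intro c M; rfl }
  exact (L.toContinuousLinearMap).continuous.comp hexp

lemma solfn_measurable (β₁ β₂ β₃ β₄ σp σm νp νm t : ℝ) (i : Fin 4)
    (u₀ : EuclideanSpace ℝ (Fin 3) → Fin 4 → ℝ) (hu : Measurable u₀) :
    Measurable (fun ξ : EuclideanSpace ℝ (Fin 3) =>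
      solfn (A1 β₁ β₂ β₃ β₄ σp σm νp νm ‖ξ‖) (u₀ ξ) t i) := by
  have heq : (fun ξ : EuclideanSpace ℝ (Fin 3) =>
      solfn (A1 β₁ β₂ β₃ β₄ σp σm νp νm ‖ξ‖) (u₀ ξ) t i)
      = fun ξ => ∑ j : Fin 4,
          (NormedSpace.exp (t • A1 β₁ β₂ β₃ β₄ σp σm νp νm ‖ξ‖)) i j * u₀ ξ j := by
    funext ξ
    simp [solfn, Matrix.mulVec, dotProduct]
  rw [heq]
  exact Finset.measurable_sum _ fun j _ =>
    (((solfn_entry_cont β₁ β₂ β₃ β₄ σp σm νp νm t i j).comp continuous_norm).measurable).mul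
      ((measurable_pi_apply j).comp hu)

end NormInstances


lemma quad_nonneg {A B C a b : ℝ} (hA : 0 < A) (hD : B ^ 2 ≤ A * C) :
    0 ≤ A * a ^ 2 + 2 * B * (a * b) + C * b ^ 2 := by
  nlinarith [sq_nonneg (A * a + B * b), mul_nonneg (sub_nonneg.mpr hD) (sq_nonneg b)]

lemma abs_le_of_sq {u S : ℝ} (hS : 0 ≤ S) (h : u ^ 2 ≤ S ^ 2) : |u| ≤ S := by
  nlinarith [abs_nonneg u, sq_abs u]

set_option maxHeartbeats 1000000 in
lemma key_pointwise
    (β₁ β₂ β₄ σp σm νp νm : ℝ)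
    (hβ₁ : 0 < β₁) (hβ₂ : 0 < β₂) (hβ₄ : 0 < β₄)
    (hσp : 0 < σp) (hσm : 0 < σm) (hνp : 0 < νp) (hνm : 0 < νm)
    (hββ : β₁ * β₄ = β₂ ^ 2)
    (r t δ c₀ : ℝ) (v : Fin 4 → ℝ)
    (hv0 : v 0 = 0) (hv1 : v 1 = 0) (hv2 : v 2 = 0)
    (hc₀ : 0 < c₀) (hv3 : |v 3 - c₀| ≤ c₀ / 2)
    (hδ : 0 < δ) (hδ1 : δ ≤ 1) (ht1 : 1 ≤ t)
    (hr1 : δ ≤ r * Real.sqrt t) (hr2 : r * Real.sqrt t ≤ 2 * δ)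
    (hδq : 32 * (4 * (σp * β₂ + σm * β₁) + (νp * β₂ + νm * β₁)) * δ ^ 2 ≤ β₁)
    (hTa : 8 * Real.sqrt β₁ *
        ((2 * β₂ + 1 + 6 * (4 * (σp * β₁ + σm * β₂) + (νp * β₁ + νm * β₂))) * c₀)
        ≤ β₂ * β₁ * c₀ * (δ * Real.sqrt t))
    (hTb : 8 * β₂ *
        ((2 * β₂ + 1 + 6 * (4 * (σp * β₁ + σm * β₂) + (νp * β₁ + νm * β₂))) * c₀)
        ≤ Real.sqrt β₁ * β₁ ^ 2 * c₀ * (δ * Real.sqrt t)) :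
    β₂ * β₁ * c₀ * (δ * Real.sqrt t) / (8 * (β₁ ^ 2 + β₂ ^ 2))
        ≤ solfn (A1 β₁ β₂ β₂ β₄ σp σm νp νm r) v t 0
      ∧ solfn (A1 β₁ β₂ β₂ β₄ σp σm νp νm r) v t 2
        ≤ -(β₁ ^ 2 * c₀ * (δ * Real.sqrt t) / (8 * (β₁ ^ 2 + β₂ ^ 2))) := by
  obtain ⟨Kq, hKq⟩ : ∃ Kq : ℝ, Kq = 4 * (σp * β₂ + σm * β₁) + (νp * β₂ + νm * β₁) := ⟨_, rfl⟩
  obtain ⟨KR, hKR⟩ : ∃ KR : ℝ, KR = 4 * (σp * β₁ + σm * β₂) + (νp * β₁ + νm * β₂) := ⟨_, rfl⟩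
  obtain ⟨KH, hKH⟩ : ∃ KH : ℝ, KH = 2 * β₂ + 1 + 6 * KR := ⟨_, rfl⟩
  rw [← hKq] at hδq
  rw [← hKR] at hTa hTb
  rw [← hKH] at hTa hTb
  have hKqpos : 0 < Kq := by rw [hKq]; positivity
  have hKRpos : 0 < KR := by rw [hKR]; positivity
  have hKHpos : 0 < KH := by rw [hKH, hKR]; positivity
  have ht0 : (0:ℝ) < t := lt_of_lt_of_le one_pos ht1
  have hst : 0 < Real.sqrt t := Real.sqrt_pos.mpr ht0
  have hstsq : Real.sqrt t ^ 2 = t := Real.sq_sqrt ht0.le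
  have hr0 : 0 < r := by
    rcases mul_pos_iff.mp (lt_of_lt_of_le hδ hr1) with h | h
    · exact h.1
    · exact absurd hst (not_lt.mpr h.2.le)
  have hsqe : r * Real.sqrt t * (r * Real.sqrt t) = r ^ 2 * t := by
    have h : Real.sqrt t * Real.sqrt t = t := Real.mul_self_sqrt ht0.le
    rw [show r * Real.sqrt t * (r * Real.sqrt t) = r ^ 2 * (Real.sqrt t * Real.sqrt t) by ring, h]
  have hrt2 : r ^ 2 * t ≤ 4 * δ ^ 2 := by
    have h1 : r * Real.sqrt t * (r * Real.sqrt t) ≤ 2 * δ * (2 * δ) :=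
      mul_le_mul hr2 hr2 (le_trans hδ.le hr1) (by positivity)
    nlinarith [hsqe]
  have hrt1 : δ * Real.sqrt t ≤ r * t := by
    have h1 := mul_le_mul_of_nonneg_right hr1 hst.le
    have e : r * Real.sqrt t * Real.sqrt t = r * t := by
      rw [mul_assoc, Real.mul_self_sqrt ht0.le]
    linarith [h1, e.le, e.ge]
  have hv3l : c₀ / 2 ≤ v 3 := by have := abs_le.mp hv3; linarith [this.1]
  have hv3u : v 3 ≤ 3 / 2 * c₀ := by have := abs_le.mp hv3; linarith [this.2]
  have hv3pos : 0 < v 3 := lt_of_lt_of_le (by positivity) hv3l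
  obtain ⟨x, hx⟩ : ∃ x : ℝ → Fin 4 → ℝ, x = solfn (A1 β₁ β₂ β₂ β₄ σp σm νp νm r) v := ⟨_, rfl⟩
  rw [← hx]
  have hx0 : x 0 = v := by rw [hx]; exact solfn_zero _ _
  -- component derivatives
  have hd0 : ∀ τ : ℝ, HasDerivAt (fun s => x s 0) (-r * x τ 1) τ := by
    intro τ
    have h := solfn_hasDerivAt (A1 β₁ β₂ β₂ β₄ σp σm νp νm r) v 0 τ
    rw [A1_mulVec] at h
    rw [← hx] at h
    simpa using h
  have hd1 : ∀ τ : ℝ, HasDerivAt (fun s => x s 1)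
      ((β₁ * r + σp * r ^ 3) * x τ 0 - νp * r ^ 2 * x τ 1 + β₂ * r * x τ 2) τ := by
    intro τ
    have h := solfn_hasDerivAt (A1 β₁ β₂ β₂ β₄ σp σm νp νm r) v 1 τ
    rw [A1_mulVec] at h
    rw [← hx] at h
    simpa using h
  have hd2 : ∀ τ : ℝ, HasDerivAt (fun s => x s 2) (-r * x τ 3) τ := by
    intro τ
    have h := solfn_hasDerivAt (A1 β₁ β₂ β₂ β₄ σp σm νp νm r) v 2 τ
    rw [A1_mulVec] at h
    rw [← hx] at h
    simpa using h
  have hd3 : ∀ τ : ℝ, HasDerivAt (fun s => x s 3)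
      (β₂ * r * x τ 0 + (β₄ * r + σm * r ^ 3) * x τ 2 - νm * r ^ 2 * x τ 3) τ := by
    intro τ
    have h := solfn_hasDerivAt (A1 β₁ β₂ β₂ β₄ σp σm νp νm r) v 3 τ
    rw [A1_mulVec] at h
    rw [← hx] at h
    simpa using h
  -- energy functional
  obtain ⟨E, hE⟩ : ∃ E : ℝ → ℝ, E = fun τ =>
    (β₁ + σp * r ^ 2) * x τ 0 ^ 2 + 2 * β₂ * (x τ 0 * x τ 2)
      + (β₄ + σm * r ^ 2) * x τ 2 ^ 2 + x τ 1 ^ 2 + x τ 3 ^ 2 := ⟨_, rfl⟩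
  have hEd : ∀ τ : ℝ, HasDerivAt E
      (-(2 * νp * r ^ 2) * x τ 1 ^ 2 - 2 * νm * r ^ 2 * x τ 3 ^ 2) τ := by
    intro τ
    have h := (((((((hd0 τ).pow 2).const_mul (β₁ + σp * r ^ 2)).add
        (((hd0 τ).mul (hd2 τ)).const_mul (2 * β₂))).add
        (((hd2 τ).pow 2).const_mul (β₄ + σm * r ^ 2))).add
        ((hd1 τ).pow 2)).add ((hd3 τ).pow 2))
    rw [hE]
    refine h.congr_deriv ?_
    ring
  have hEcont : Continuous E :=
    continuous_iff_continuousAt.mpr fun τ => (hEd τ).continuousAt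
  have hEanti : AntitoneOn E (Set.Ici (0:ℝ)) := by
    apply antitoneOn_of_deriv_nonpos (convex_Ici 0) hEcont.continuousOn
    · intro τ hτ
      exact (hEd τ).differentiableAt.differentiableWithinAt
    · intro τ hτ
      rw [(hEd τ).deriv]
      have h1 : 0 ≤ 2 * νp * r ^ 2 * x τ 1 ^ 2 := by positivity
      have h2 : 0 ≤ 2 * νm * r ^ 2 * x τ 3 ^ 2 := by positivity
      linarith only [h1, h2]
  have hE0 : E 0 = v 3 ^ 2 := by
    rw [hE]; simp [hx0, hv0, hv1, hv2]
  have hEle : ∀ τ : ℝ, 0 ≤ τ → E τ ≤ v 3 ^ 2 := fun τ hτ => by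
    have h := hEanti Set.self_mem_Ici (Set.mem_Ici.mpr hτ) hτ
    rwa [hE0] at h
  have hdisc : β₂ ^ 2 ≤ (β₁ + σp * r ^ 2) * (β₄ + σm * r ^ 2) := by
    have h1 : 0 ≤ σm * β₁ * r ^ 2 := by positivity
    have h2 : 0 ≤ σp * β₄ * r ^ 2 := by positivity
    have h3 : 0 ≤ σp * σm * (r ^ 2) ^ 2 := by positivity
    nlinarith [hββ, h1, h2, h3]
  have hQnn : ∀ τ : ℝ, 0 ≤ (β₁ + σp * r ^ 2) * x τ 0 ^ 2 + 2 * β₂ * (x τ 0 * x τ 2)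
      + (β₄ + σm * r ^ 2) * x τ 2 ^ 2 := fun τ =>
    quad_nonneg (by positivity) hdisc
  have huv : ∀ τ : ℝ, 0 ≤ τ → x τ 1 ^ 2 + x τ 3 ^ 2 ≤ v 3 ^ 2 := fun τ hτ => by
    have h1 := hEle τ hτ
    have h2 := hQnn τ
    simp only [hE] at h1
    linarith only [h1, h2]
  have hub : ∀ τ : ℝ, 0 ≤ τ → |x τ 1| ≤ v 3 := fun τ hτ =>
    abs_le_of_sq hv3pos.le (by linarith only [huv τ hτ, sq_nonneg (x τ 3)])
  have hvb : ∀ τ : ℝ, 0 ≤ τ → |x τ 3| ≤ v 3 := fun τ hτ =>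
    abs_le_of_sq hv3pos.le (by linarith only [huv τ hτ, sq_nonneg (x τ 1)])
  -- linear growth bounds on the density components
  have hab : ∀ τ ∈ Set.Icc (0:ℝ) t, |x τ 0| ≤ r * v 3 * τ := by
    intro τ hτ
    have h := (convex_Icc (0:ℝ) t).norm_image_sub_le_of_norm_hasDerivWithin_le
      (f := fun s => x s 0) (f' := fun s => -r * x s 1) (s := Set.Icc 0 t) (C := r * v 3)
      (fun s hs => (hd0 s).hasDerivWithinAt)
      (fun s hs => by
        rw [Real.norm_eq_abs, abs_mul, abs_neg, abs_of_pos hr0]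
        exact mul_le_mul_of_nonneg_left (hub s hs.1) hr0.le)
      (Set.left_mem_Icc.mpr ht0.le) hτ
    simpa [hx0, hv0, abs_of_nonneg hτ.1] using h
  have hbb : ∀ τ ∈ Set.Icc (0:ℝ) t, |x τ 2| ≤ r * v 3 * τ := by
    intro τ hτ
    have h := (convex_Icc (0:ℝ) t).norm_image_sub_le_of_norm_hasDerivWithin_le
      (f := fun s => x s 2) (f' := fun s => -r * x s 3) (s := Set.Icc 0 t) (C := r * v 3)
      (fun s hs => (hd2 s).hasDerivWithinAt)
      (fun s hs => by
        rw [Real.norm_eq_abs, abs_mul, abs_neg, abs_of_pos hr0]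
        exact mul_le_mul_of_nonneg_left (hvb s hs.1) hr0.le)
      (Set.left_mem_Icc.mpr ht0.le) hτ
    simpa [hx0, hv2, abs_of_nonneg hτ.1] using h
  have hq4 : ∀ τ ∈ Set.Icc (0:ℝ) t, r ^ 2 * τ ≤ 4 * δ ^ 2 := by
    intro τ hτ
    have h1 : r ^ 2 * τ ≤ r ^ 2 * t := mul_le_mul_of_nonneg_left hτ.2 (sq_nonneg r)
    linarith only [h1, hrt2]
  -- the function q = β₂ u - β₁ w
  obtain ⟨q, hq⟩ : ∃ q : ℝ → ℝ, q = fun τ => β₂ * x τ 1 - β₁ * x τ 3 := ⟨_, rfl⟩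
  have hqd : ∀ τ : ℝ, HasDerivAt q
      (β₂ * ((β₁ * r + σp * r ^ 3) * x τ 0 - νp * r ^ 2 * x τ 1 + β₂ * r * x τ 2)
        - β₁ * (β₂ * r * x τ 0 + (β₄ * r + σm * r ^ 3) * x τ 2 - νm * r ^ 2 * x τ 3)) τ := by
    intro τ
    rw [hq]
    exact ((hd1 τ).const_mul β₂).sub ((hd3 τ).const_mul β₁)
  have hqd_eq : ∀ τ : ℝ,
      β₂ * ((β₁ * r + σp * r ^ 3) * x τ 0 - νp * r ^ 2 * x τ 1 + β₂ * r * x τ 2)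
        - β₁ * (β₂ * r * x τ 0 + (β₄ * r + σm * r ^ 3) * x τ 2 - νm * r ^ 2 * x τ 3)
      = σp * β₂ * r ^ 3 * x τ 0 - σm * β₁ * r ^ 3 * x τ 2
        + β₁ * νm * r ^ 2 * x τ 3 - β₂ * νp * r ^ 2 * x τ 1 := by
    intro τ
    linear_combination (-(r * x τ 2)) * hββ
  have hqb : ∀ τ ∈ Set.Icc (0:ℝ) t,
      |σp * β₂ * r ^ 3 * x τ 0 - σm * β₁ * r ^ 3 * x τ 2
        + β₁ * νm * r ^ 2 * x τ 3 - β₂ * νp * r ^ 2 * x τ 1| ≤ r ^ 2 * v 3 * Kq := by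
    intro τ hτ
    have ha' := abs_le.mp (hab τ hτ)
    have hb' := abs_le.mp (hbb τ hτ)
    have hu' := abs_le.mp (hub τ hτ.1)
    have hv' := abs_le.mp (hvb τ hτ.1)
    have P1 := mul_le_mul_of_nonneg_left ha'.2 (show (0:ℝ) ≤ σp * β₂ * r ^ 3 by positivity)
    have P1' := mul_le_mul_of_nonneg_left ha'.1 (show (0:ℝ) ≤ σp * β₂ * r ^ 3 by positivity)
    have P2 := mul_le_mul_of_nonneg_left hb'.2 (show (0:ℝ) ≤ σm * β₁ * r ^ 3 by positivity)
    have P2' := mul_le_mul_of_nonneg_left hb'.1 (show (0:ℝ) ≤ σm * β₁ * r ^ 3 by positivity)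
    have P3 := mul_le_mul_of_nonneg_left hv'.2 (show (0:ℝ) ≤ β₁ * νm * r ^ 2 by positivity)
    have P3' := mul_le_mul_of_nonneg_left hv'.1 (show (0:ℝ) ≤ β₁ * νm * r ^ 2 by positivity)
    have P4 := mul_le_mul_of_nonneg_left hu'.2 (show (0:ℝ) ≤ β₂ * νp * r ^ 2 by positivity)
    have P4' := mul_le_mul_of_nonneg_left hu'.1 (show (0:ℝ) ≤ β₂ * νp * r ^ 2 by positivity)
    have hδ4 : r ^ 2 * τ ≤ 4 := by
      have h2 : δ * δ ≤ 1 * 1 := mul_le_mul hδ1 hδ1 hδ.le zero_le_one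
      linarith only [hq4 τ hτ, h2]
    have Q1 := mul_le_mul_of_nonneg_left hδ4
      (mul_nonneg (mul_nonneg (mul_nonneg hσp.le hβ₂.le) hv3pos.le) (sq_nonneg r))
    have Q2 := mul_le_mul_of_nonneg_left hδ4
      (mul_nonneg (mul_nonneg (mul_nonneg hσm.le hβ₁.le) hv3pos.le) (sq_nonneg r))
    rw [abs_le]
    constructor
    · rw [hKq]
      linarith only [P1', P2, P3', P4, Q1, Q2]
    · rw [hKq]
      linarith only [P1, P2', P3, P4', Q1, Q2]
  have hqMVT : ∀ τ ∈ Set.Icc (0:ℝ) t, |q τ - q 0| ≤ r ^ 2 * v 3 * Kq * τ := by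
    intro τ hτ
    have h := (convex_Icc (0:ℝ) t).norm_image_sub_le_of_norm_hasDerivWithin_le
      (f := q) (f' := fun s =>
        β₂ * ((β₁ * r + σp * r ^ 3) * x s 0 - νp * r ^ 2 * x s 1 + β₂ * r * x s 2)
        - β₁ * (β₂ * r * x s 0 + (β₄ * r + σm * r ^ 3) * x s 2 - νm * r ^ 2 * x s 3))
      (s := Set.Icc 0 t) (C := r ^ 2 * v 3 * Kq)
      (fun s hs => (hqd s).hasDerivWithinAt)
      (fun s hs => by simpa only [Real.norm_eq_abs, hqd_eq s] using hqb s hs)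
      (Set.left_mem_Icc.mpr ht0.le) hτ
    simpa [abs_of_nonneg hτ.1] using h
  have hq0 : q 0 = -(β₁ * v 3) := by
    rw [hq]; simp [hx0, hv1]
  have hqneg : ∀ τ ∈ Set.Icc (0:ℝ) t, q τ ≤ -(β₁ * c₀ / 4) := by
    intro τ hτ
    have h := (abs_le.mp (hqMVT τ hτ)).2
    rw [hq0] at h
    have G3 := mul_le_mul_of_nonneg_left (hq4 τ hτ) (mul_nonneg hKqpos.le hv3pos.le)
    have h4 : Kq * (4 * δ ^ 2) ≤ β₁ / 8 := by linarith only [hδq]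
    have G2 := mul_le_mul_of_nonneg_right h4 hv3pos.le
    have G1 := mul_le_mul_of_nonneg_left hv3l hβ₁.le
    linarith only [h, G3, G2, G1, mul_pos hβ₁ hc₀]
  -- lower bound for P = β₂ a - β₁ b
  obtain ⟨g, hg⟩ : ∃ g : ℝ → ℝ, g = fun τ => β₂ * x τ 0 - β₁ * x τ 2 - β₁ * c₀ / 4 * r * τ := ⟨_, rfl⟩
  have hgd : ∀ τ : ℝ, HasDerivAt g
      (β₂ * (-r * x τ 1) - β₁ * (-r * x τ 3) - β₁ * c₀ / 4 * r) τ := by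
    intro τ
    rw [hg]
    have h := (((hd0 τ).const_mul β₂).sub ((hd2 τ).const_mul β₁)).sub
      ((hasDerivAt_id τ).const_mul (β₁ * c₀ / 4 * r))
    refine h.congr_deriv ?_
    ring
  have hgmono : MonotoneOn g (Set.Icc 0 t) := by
    apply monotoneOn_of_deriv_nonneg (convex_Icc 0 t)
      (Continuous.continuousOn (continuous_iff_continuousAt.mpr fun τ => (hgd τ).continuousAt))
    · intro τ hτ
      exact (hgd τ).differentiableAt.differentiableWithinAt
    · intro τ hτ
      rw [interior_Icc] at hτ
      rw [(hgd τ).deriv]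
      have hqτ := hqneg τ (Set.Ioo_subset_Icc_self hτ)
      simp only [hq] at hqτ
      have h := mul_le_mul_of_nonneg_left hqτ hr0.le
      linarith only [h]
  have hg0 : g 0 = 0 := by
    rw [hg]; simp [hx0, hv0, hv2]
  have hPt : β₁ * c₀ / 4 * (δ * Real.sqrt t) ≤ β₂ * x t 0 - β₁ * x t 2 := by
    have h := hgmono (Set.left_mem_Icc.mpr ht0.le) (Set.right_mem_Icc.mpr ht0.le) ht0.le
    rw [hg0] at h
    simp only [hg] at h
    have h2 : β₁ * c₀ / 4 * (δ * Real.sqrt t) ≤ β₁ * c₀ / 4 * (r * t) :=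
      mul_le_mul_of_nonneg_left hrt1 (div_nonneg (mul_nonneg hβ₁.le hc₀.le) (by norm_num))
    linarith only [h, h2]
  -- the acoustic energy F and its square root H
  obtain ⟨F, hF⟩ : ∃ F : ℝ → ℝ, F = fun τ =>
      (β₁ ^ 2 + β₂ ^ 2) * (β₁ * x τ 0 + β₂ * x τ 2) ^ 2
        + β₁ * (β₁ * x τ 1 + β₂ * x τ 3) ^ 2 := ⟨_, rfl⟩
  have hWd : ∀ τ : ℝ, HasDerivAt (fun s => β₁ * x s 0 + β₂ * x s 2)
      (β₁ * (-r * x τ 1) + β₂ * (-r * x τ 3)) τ := fun τ =>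
    ((hd0 τ).const_mul β₁).add ((hd2 τ).const_mul β₂)
  have hZd : ∀ τ : ℝ, HasDerivAt (fun s => β₁ * x s 1 + β₂ * x s 3)
      (β₁ * ((β₁ * r + σp * r ^ 3) * x τ 0 - νp * r ^ 2 * x τ 1 + β₂ * r * x τ 2)
        + β₂ * (β₂ * r * x τ 0 + (β₄ * r + σm * r ^ 3) * x τ 2 - νm * r ^ 2 * x τ 3)) τ :=
    fun τ => ((hd1 τ).const_mul β₁).add ((hd3 τ).const_mul β₂)
  have hFd : ∀ τ : ℝ, HasDerivAt F
      (2 * β₁ * (β₁ * x τ 1 + β₂ * x τ 3)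
        * (σp * β₁ * r ^ 3 * x τ 0 + σm * β₂ * r ^ 3 * x τ 2
            - νp * β₁ * r ^ 2 * x τ 1 - νm * β₂ * r ^ 2 * x τ 3)) τ := by
    intro τ
    rw [hF]
    have h := (((hWd τ).pow 2).const_mul (β₁ ^ 2 + β₂ ^ 2)).add
      (((hZd τ).pow 2).const_mul β₁)
    refine h.congr_deriv ?_
    linear_combination (2 * r * (β₁ * x τ 1 + β₂ * x τ 3) * β₂ * x τ 2) * hββ
  have hFnn : ∀ τ : ℝ, 0 ≤ F τ := by
    intro τ
    rw [hF]
    exact add_nonneg (mul_nonneg (by positivity) (sq_nonneg _)) (mul_nonneg hβ₁.le (sq_nonneg _))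
  have hFc : ∀ τ : ℝ, 0 < F τ + β₁ * c₀ ^ 2 :=
    fun τ => add_pos_of_nonneg_of_pos (hFnn τ) (mul_pos hβ₁ (pow_pos hc₀ 2))
  obtain ⟨H, hH⟩ : ∃ H : ℝ → ℝ, H = fun τ => Real.sqrt (F τ + β₁ * c₀ ^ 2) := ⟨_, rfl⟩
  have hHd : ∀ τ : ℝ, HasDerivAt H
      (2 * β₁ * (β₁ * x τ 1 + β₂ * x τ 3)
        * (σp * β₁ * r ^ 3 * x τ 0 + σm * β₂ * r ^ 3 * x τ 2
            - νp * β₁ * r ^ 2 * x τ 1 - νm * β₂ * r ^ 2 * x τ 3)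
        / (2 * Real.sqrt (F τ + β₁ * c₀ ^ 2))) τ := by
    intro τ
    rw [hH]
    have h := (Real.hasDerivAt_sqrt (ne_of_gt (hFc τ))).comp τ ((hFd τ).add_const (β₁ * c₀ ^ 2))
    refine h.congr_deriv ?_
    ring
  -- bound on the remainder Rm
  have hRb : ∀ τ ∈ Set.Icc (0:ℝ) t,
      |σp * β₁ * r ^ 3 * x τ 0 + σm * β₂ * r ^ 3 * x τ 2
        - νp * β₁ * r ^ 2 * x τ 1 - νm * β₂ * r ^ 2 * x τ 3| ≤ r ^ 2 * v 3 * KR := by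
    intro τ hτ
    have ha' := abs_le.mp (hab τ hτ)
    have hb' := abs_le.mp (hbb τ hτ)
    have hu' := abs_le.mp (hub τ hτ.1)
    have hv' := abs_le.mp (hvb τ hτ.1)
    have P1 := mul_le_mul_of_nonneg_left ha'.2 (show (0:ℝ) ≤ σp * β₁ * r ^ 3 by positivity)
    have P1' := mul_le_mul_of_nonneg_left ha'.1 (show (0:ℝ) ≤ σp * β₁ * r ^ 3 by positivity)
    have P2 := mul_le_mul_of_nonneg_left hb'.2 (show (0:ℝ) ≤ σm * β₂ * r ^ 3 by positivity)
    have P2' := mul_le_mul_of_nonneg_left hb'.1 (show (0:ℝ) ≤ σm * β₂ * r ^ 3 by positivity)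
    have P3 := mul_le_mul_of_nonneg_left hv'.2 (show (0:ℝ) ≤ β₂ * νm * r ^ 2 by positivity)
    have P3' := mul_le_mul_of_nonneg_left hv'.1 (show (0:ℝ) ≤ β₂ * νm * r ^ 2 by positivity)
    have P4 := mul_le_mul_of_nonneg_left hu'.2 (show (0:ℝ) ≤ β₁ * νp * r ^ 2 by positivity)
    have P4' := mul_le_mul_of_nonneg_left hu'.1 (show (0:ℝ) ≤ β₁ * νp * r ^ 2 by positivity)
    have hδ4 : r ^ 2 * τ ≤ 4 := by
      have h2 : δ * δ ≤ 1 * 1 := mul_le_mul hδ1 hδ1 hδ.le zero_le_one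
      linarith only [hq4 τ hτ, h2]
    have Q1 := mul_le_mul_of_nonneg_left hδ4
      (mul_nonneg (mul_nonneg (mul_nonneg hσp.le hβ₁.le) hv3pos.le) (sq_nonneg r))
    have Q2 := mul_le_mul_of_nonneg_left hδ4
      (mul_nonneg (mul_nonneg (mul_nonneg hσm.le hβ₂.le) hv3pos.le) (sq_nonneg r))
    rw [abs_le]
    constructor
    · rw [hKR]
      linarith only [P1', P2', P3, P4, Q1, Q2]
    · rw [hKR]
      linarith only [P1, P2, P3', P4', Q1, Q2]
  -- derivative bound for H
  have hHb : ∀ τ ∈ Set.Icc (0:ℝ) t,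
      |2 * β₁ * (β₁ * x τ 1 + β₂ * x τ 3)
        * (σp * β₁ * r ^ 3 * x τ 0 + σm * β₂ * r ^ 3 * x τ 2
            - νp * β₁ * r ^ 2 * x τ 1 - νm * β₂ * r ^ 2 * x τ 3)
        / (2 * Real.sqrt (F τ + β₁ * c₀ ^ 2))| ≤ Real.sqrt β₁ * (r ^ 2 * v 3 * KR) := by
    intro τ hτ
    have hD : 0 < Real.sqrt (F τ + β₁ * c₀ ^ 2) := Real.sqrt_pos.mpr (hFc τ)
    have hzD : Real.sqrt β₁ * |β₁ * x τ 1 + β₂ * x τ 3| ≤ Real.sqrt (F τ + β₁ * c₀ ^ 2) := by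
      rw [← Real.sqrt_sq (by positivity : (0:ℝ) ≤ Real.sqrt β₁ * |β₁ * x τ 1 + β₂ * x τ 3|)]
      apply Real.sqrt_le_sqrt
      have e1 : (Real.sqrt β₁ * |β₁ * x τ 1 + β₂ * x τ 3|) ^ 2
          = β₁ * (β₁ * x τ 1 + β₂ * x τ 3) ^ 2 := by
        rw [mul_pow, Real.sq_sqrt hβ₁.le, sq_abs]
      rw [e1]
      simp only [hF]
      have e2 : 0 ≤ (β₁ ^ 2 + β₂ ^ 2) * (β₁ * x τ 0 + β₂ * x τ 2) ^ 2 :=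
        mul_nonneg (by positivity) (sq_nonneg _)
      have e3 : 0 ≤ β₁ * c₀ ^ 2 := mul_nonneg hβ₁.le (sq_nonneg _)
      linarith only [e2, e3]
    have hRm := hRb τ hτ
    rw [abs_div, div_le_iff₀ (by positivity : (0:ℝ) < |2 * Real.sqrt (F τ + β₁ * c₀ ^ 2)|)]
    rw [abs_of_pos (by linarith only [hD] : (0:ℝ) < 2 * Real.sqrt (F τ + β₁ * c₀ ^ 2))]
    have e4 : |2 * β₁ * (β₁ * x τ 1 + β₂ * x τ 3)
        * (σp * β₁ * r ^ 3 * x τ 0 + σm * β₂ * r ^ 3 * x τ 2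
            - νp * β₁ * r ^ 2 * x τ 1 - νm * β₂ * r ^ 2 * x τ 3)|
        = 2 * β₁ * |β₁ * x τ 1 + β₂ * x τ 3|
          * |σp * β₁ * r ^ 3 * x τ 0 + σm * β₂ * r ^ 3 * x τ 2
            - νp * β₁ * r ^ 2 * x τ 1 - νm * β₂ * r ^ 2 * x τ 3| := by
      rw [abs_mul, abs_mul, abs_of_pos (by linarith only [hβ₁] : (0:ℝ) < 2 * β₁)]
    rw [e4]
    have hsub : 2 * β₁ * |β₁ * x τ 1 + β₂ * x τ 3|
          * |σp * β₁ * r ^ 3 * x τ 0 + σm * β₂ * r ^ 3 * x τ 2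
            - νp * β₁ * r ^ 2 * x τ 1 - νm * β₂ * r ^ 2 * x τ 3|
        = 2 * (Real.sqrt β₁ * |σp * β₁ * r ^ 3 * x τ 0 + σm * β₂ * r ^ 3 * x τ 2
            - νp * β₁ * r ^ 2 * x τ 1 - νm * β₂ * r ^ 2 * x τ 3|)
          * (Real.sqrt β₁ * |β₁ * x τ 1 + β₂ * x τ 3|) := by
      linear_combination (-(2 * |β₁ * x τ 1 + β₂ * x τ 3|
        * |σp * β₁ * r ^ 3 * x τ 0 + σm * β₂ * r ^ 3 * x τ 2
            - νp * β₁ * r ^ 2 * x τ 1 - νm * β₂ * r ^ 2 * x τ 3|))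
        * (Real.mul_self_sqrt hβ₁.le)
    rw [hsub]
    have s1 := mul_le_mul_of_nonneg_left hzD
      (by positivity : (0:ℝ) ≤ 2 * (Real.sqrt β₁ * |σp * β₁ * r ^ 3 * x τ 0 + σm * β₂ * r ^ 3 * x τ 2
            - νp * β₁ * r ^ 2 * x τ 1 - νm * β₂ * r ^ 2 * x τ 3|))
    have s2 := mul_le_mul_of_nonneg_right
      (mul_le_mul_of_nonneg_left hRm (by positivity : (0:ℝ) ≤ 2 * Real.sqrt β₁)) hD.le
    have s3 := mul_le_mul_of_nonneg_right
      (mul_le_mul_of_nonneg_left hRm (by positivity : (0:ℝ) ≤ Real.sqrt β₁)) hD.le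
    linarith only [s1, s3]
  -- MVT for H
  have hHMVT : ∀ τ ∈ Set.Icc (0:ℝ) t, |H τ - H 0| ≤ Real.sqrt β₁ * (r ^ 2 * v 3 * KR) * τ := by
    intro τ hτ
    have h := (convex_Icc (0:ℝ) t).norm_image_sub_le_of_norm_hasDerivWithin_le
      (f := H) (f' := fun s => 2 * β₁ * (β₁ * x s 1 + β₂ * x s 3)
        * (σp * β₁ * r ^ 3 * x s 0 + σm * β₂ * r ^ 3 * x s 2
            - νp * β₁ * r ^ 2 * x s 1 - νm * β₂ * r ^ 2 * x s 3)
        / (2 * Real.sqrt (F s + β₁ * c₀ ^ 2)))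
      (s := Set.Icc 0 t) (C := Real.sqrt β₁ * (r ^ 2 * v 3 * KR))
      (fun s hs => (hHd s).hasDerivWithinAt)
      (fun s hs => by simpa only [Real.norm_eq_abs] using hHb s hs)
      (Set.left_mem_Icc.mpr ht0.le) hτ
    simpa [abs_of_nonneg hτ.1] using h
  have hF0 : F 0 = β₁ * (β₂ * v 3) ^ 2 := by
    rw [hF]; simp [hx0, hv0, hv1, hv2]
  have hH0 : H 0 ≤ Real.sqrt β₁ * ((3 / 2 * β₂ + 1) * c₀) := by
    rw [hH]
    have hv2' : (β₂ * v 3) ^ 2 ≤ (3 / 2 * (β₂ * c₀)) ^ 2 := by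
      have h1 := mul_le_mul_of_nonneg_left hv3u hβ₂.le
      exact pow_le_pow_left₀ (mul_nonneg hβ₂.le hv3pos.le) (by linarith only [h1]) 2
    have T1 := mul_le_mul_of_nonneg_left hv2' hβ₁.le
    have T2 : (0:ℝ) ≤ β₁ * β₂ * c₀ ^ 2 := by positivity
    have h1 : F 0 + β₁ * c₀ ^ 2 ≤ β₁ * ((3 / 2 * β₂ + 1) * c₀) ^ 2 := by
      rw [hF0]
      linarith only [T1, T2]
    calc Real.sqrt (F 0 + β₁ * c₀ ^ 2) ≤ Real.sqrt (β₁ * ((3 / 2 * β₂ + 1) * c₀) ^ 2) :=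
          Real.sqrt_le_sqrt h1
      _ = Real.sqrt β₁ * ((3 / 2 * β₂ + 1) * c₀) := by
          rw [Real.sqrt_mul hβ₁.le, Real.sqrt_sq (by positivity)]
  have hHt : H t ≤ Real.sqrt β₁ * (KH * c₀) := by
    have h := (abs_le.mp (hHMVT t (Set.right_mem_Icc.mpr ht0.le))).2
    have hδδ : δ * δ ≤ 1 * 1 := mul_le_mul hδ1 hδ1 hδ.le zero_le_one
    have U1 : r ^ 2 * t ≤ 4 := by linarith only [hrt2, hδδ]
    have U2 := mul_le_mul_of_nonneg_left U1
      (mul_nonneg (mul_nonneg (Real.sqrt_nonneg β₁) hv3pos.le) hKRpos.le)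
    have U3 := mul_le_mul_of_nonneg_left hv3u
      (by positivity : (0:ℝ) ≤ 4 * (Real.sqrt β₁ * KR))
    have W0 : (0:ℝ) ≤ Real.sqrt β₁ * β₂ * c₀ := by positivity
    rw [hKH]
    linarith only [h, hH0, U2, U3, W0]
  -- bound on the acoustic component W
  have hHsq : H t ^ 2 = F t + β₁ * c₀ ^ 2 := by
    rw [hH]; exact Real.sq_sqrt (hFc t).le
  have h4 : (Real.sqrt β₁ * (KH * c₀)) ^ 2 = β₁ * (KH * c₀) ^ 2 := by
    rw [mul_pow, Real.sq_sqrt hβ₁.le]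
  have hFt : F t ≤ β₁ * (KH * c₀) ^ 2 := by
    have h3 := pow_le_pow_left₀ (by rw [hH]; exact Real.sqrt_nonneg _) hHt 2
    rw [hHsq] at h3
    have h5 : (0:ℝ) ≤ β₁ * c₀ ^ 2 := mul_nonneg hβ₁.le (sq_nonneg _)
    linarith only [h3, h4.le, h5]
  have hWb : (β₁ ^ 2 + β₂ ^ 2) * (β₁ * x t 0 + β₂ * x t 2) ^ 2 ≤ β₁ * (KH * c₀) ^ 2 := by
    have h6 : (0:ℝ) ≤ β₁ * (β₁ * x t 1 + β₂ * x t 3) ^ 2 := mul_nonneg hβ₁.le (sq_nonneg _)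
    simp only [hF] at hFt
    linarith only [hFt, h6]
  have hWa : |β₁ * (β₁ * x t 0 + β₂ * x t 2)| ≤ Real.sqrt β₁ * (KH * c₀) := by
    apply abs_le_of_sq (by positivity)
    have h7 : (0:ℝ) ≤ β₂ ^ 2 * (β₁ * x t 0 + β₂ * x t 2) ^ 2 :=
      mul_nonneg (sq_nonneg _) (sq_nonneg _)
    have e : (β₁ * (β₁ * x t 0 + β₂ * x t 2)) ^ 2
        = β₁ ^ 2 * (β₁ * x t 0 + β₂ * x t 2) ^ 2 := by ring
    rw [e]
    linarith only [hWb, h7, h4.le, h4.ge]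
  -- final assembly
  constructor
  · rw [div_le_iff₀ (by positivity : (0:ℝ) < 8 * (β₁ ^ 2 + β₂ ^ 2))]
    have V1 := mul_le_mul_of_nonneg_left hPt hβ₂.le
    have V2 := (abs_le.mp hWa).1
    linarith only [V1, V2, hTa]
  · rw [show -(β₁ ^ 2 * c₀ * (δ * Real.sqrt t) / (8 * (β₁ ^ 2 + β₂ ^ 2)))
        = -(β₁ ^ 2 * c₀ * (δ * Real.sqrt t)) / (8 * (β₁ ^ 2 + β₂ ^ 2)) by ring]
    rw [le_div_iff₀ (by positivity : (0:ℝ) < 8 * (β₁ ^ 2 + β₂ ^ 2))]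
    rw [← mul_le_mul_iff_of_pos_left hβ₁]
    have V3 := mul_le_mul_of_nonneg_left (abs_le.mp hWa).2 hβ₂.le
    have V4 := mul_le_mul_of_nonneg_left hPt (sq_nonneg β₁)
    have V5 := mul_le_mul_of_nonneg_left hTb (Real.sqrt_nonneg β₁)
    have V6 : Real.sqrt β₁ * (Real.sqrt β₁ * β₁ ^ 2 * c₀ * (δ * Real.sqrt t))
        = β₁ ^ 3 * c₀ * (δ * Real.sqrt t) := by
      linear_combination (β₁ ^ 2 * c₀ * (δ * Real.sqrt t)) * (Real.mul_self_sqrt hβ₁.le)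
    linarith only [V3, V4, V5, V6.le, V6.ge]

set_option maxHeartbeats 1000000 in
/-- Lower bound `(1+t)^{-1/4}` on the `L²` decay of the low-frequency parts of the
perturbed fraction densities for well-chosen initial data. -/
theorem lowfreq_L2_lower_bound_densities
    (β₁ β₂ β₃ β₄ σp σm νp νm : ℝ)
    (hβ₁ : 0 < β₁) (hβ₂ : 0 < β₂) (hβ₃ : 0 < β₃) (hβ₄ : 0 < β₄)
    (hσp : 0 < σp) (hσm : 0 < σm) (hνp : 0 < νp) (hνm : 0 < νm)
    (hβ : β₂ = β₃) (hββ : β₁ * β₄ = β₂ ^ 2) :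
    ∃ η > 0,
      ∀ u₀ : EuclideanSpace ℝ (Fin 3) → (Fin 4 → ℝ), Measurable u₀ →
        (∃ B : ℝ, ∀ ξ, ∀ i : Fin 4, |u₀ ξ i| ≤ B) →
        (∀ ξ, ‖ξ‖ ≤ η → u₀ ξ 0 = 0 ∧ u₀ ξ 1 = 0 ∧ u₀ ξ 2 = 0) →
        ∀ c₀ s M : ℝ, 0 < c₀ → 0 < s → 0 < M →
          (∀ ξ, ‖ξ‖ ≤ η → |u₀ ξ 3 - c₀| ≤ M * ‖ξ‖ ^ s) →
          ∃ C₁ > 0, ∃ T > 0, ∀ t : ℝ, T ≤ t → ∀ i : Fin 4, i = 0 ∨ i = 2 →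
            Real.sqrt (∫ ξ in Metric.closedBall (0 : EuclideanSpace ℝ (Fin 3)) η,
                ((NormedSpace.exp (t • A1 β₁ β₂ β₃ β₄ σp σm νp νm ‖ξ‖)).mulVec
                    (u₀ ξ) i) ^ 2)
              ≥ C₁ * c₀ * (1 + t) ^ (-(1 / 4 : ℝ)) := by
  subst hβ
  refine ⟨1, one_pos, ?_⟩
  rintro u₀ hu₀ ⟨B, hB⟩ hvan c₀ s M hc₀ hs hM hMb
  -- constants
  obtain ⟨Kq, hKq⟩ : ∃ Kq : ℝ, Kq = 4 * (σp * β₂ + σm * β₁) + (νp * β₂ + νm * β₁) := ⟨_, rfl⟩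
  obtain ⟨KR, hKR⟩ : ∃ KR : ℝ, KR = 4 * (σp * β₁ + σm * β₂) + (νp * β₁ + νm * β₂) := ⟨_, rfl⟩
  obtain ⟨KH, hKH⟩ : ∃ KH : ℝ, KH = 2 * β₂ + 1 + 6 * KR := ⟨_, rfl⟩
  have hKqpos : 0 < Kq := by rw [hKq]; positivity
  have hKRpos : 0 < KR := by rw [hKR]; positivity
  have hKHpos : 0 < KH := by rw [hKH]; linarith only [hKRpos, hβ₂]
  obtain ⟨δ, hδdef⟩ : ∃ δ : ℝ, δ = Real.sqrt (min 1 (β₁ / (32 * Kq))) := ⟨_, rfl⟩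
  have hmin1 : (0:ℝ) < min 1 (β₁ / (32 * Kq)) :=
    lt_min one_pos (div_pos hβ₁ (by linarith only [hKqpos]))
  have hδpos : 0 < δ := by rw [hδdef]; exact Real.sqrt_pos.mpr hmin1
  have hδ1 : δ ≤ 1 := by
    rw [hδdef]
    calc Real.sqrt (min 1 (β₁ / (32 * Kq))) ≤ Real.sqrt 1 :=
          Real.sqrt_le_sqrt (min_le_left _ _)
      _ = 1 := Real.sqrt_one
  have hδq : 32 * Kq * δ ^ 2 ≤ β₁ := by
    have h1 : δ ^ 2 ≤ β₁ / (32 * Kq) := by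
      rw [hδdef, Real.sq_sqrt hmin1.le]; exact min_le_right _ _
    have h2 := mul_le_mul_of_nonneg_left h1 (by linarith only [hKqpos] : (0:ℝ) ≤ 32 * Kq)
    have h3 : 32 * Kq * (β₁ / (32 * Kq)) = β₁ := by
      field_simp
    linarith only [h2, h3.le, h3.ge]
  obtain ⟨ρ, hρdef⟩ : ∃ ρ : ℝ, ρ = min 1 ((c₀ / (2 * M)) ^ (1 / s : ℝ)) := ⟨_, rfl⟩
  have hρpos : 0 < ρ := by
    rw [hρdef]
    exact lt_min one_pos (Real.rpow_pos_of_pos (div_pos hc₀ (by linarith only [hM])) _)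
  have hρ1 : ρ ≤ 1 := by rw [hρdef]; exact min_le_left _ _
  have hρs : ∀ r : ℝ, 0 ≤ r → r ≤ ρ → M * r ^ s ≤ c₀ / 2 := by
    intro r hr0 hrρ
    have h1 : r ^ s ≤ ρ ^ s := Real.rpow_le_rpow hr0 hrρ hs.le
    have h2 : ρ ^ s ≤ ((c₀ / (2 * M)) ^ (1 / s : ℝ)) ^ s := by
      apply Real.rpow_le_rpow (by rw [hρdef]; positivity) _ hs.le
      rw [hρdef]; exact min_le_right _ _
    have h3 : ((c₀ / (2 * M)) ^ (1 / s : ℝ)) ^ s = c₀ / (2 * M) := by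
      rw [← Real.rpow_mul (le_of_lt (div_pos hc₀ (by linarith only [hM]))), one_div,
        inv_mul_cancel₀ hs.ne', Real.rpow_one]
    have h4 := mul_le_mul_of_nonneg_left ((h1.trans h2).trans_eq h3) hM.le
    have h5 : M * (c₀ / (2 * M)) = c₀ / 2 := by field_simp
    linarith only [h4, h5.le]
  -- geometric constants
  obtain ⟨cm, hcm⟩ : ∃ cm : ℝ, cm = β₁ * min β₁ β₂ / (8 * (β₁ ^ 2 + β₂ ^ 2)) := ⟨_, rfl⟩
  have hcmpos : 0 < cm := by
    rw [hcm]
    exact div_pos (mul_pos hβ₁ (lt_min hβ₁ hβ₂)) (by positivity)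
  obtain ⟨κ, hκ⟩ : ∃ κ : ℝ,
      κ = (volume (Metric.ball (0 : EuclideanSpace ℝ (Fin 3)) 1)).toReal := ⟨_, rfl⟩
  have hκpos : 0 < κ := by
    rw [hκ]
    refine ENNReal.toReal_pos ?_ ?_
    · exact (Metric.measure_ball_pos volume _ one_pos).ne'
    · exact measure_ball_lt_top.ne
  obtain ⟨C₁, hC₁⟩ : ∃ C₁ : ℝ, C₁ = Real.sqrt (cm ^ 2 * δ ^ 5 * κ / 8) := ⟨_, rfl⟩
  have hC₁pos : 0 < C₁ := by
    rw [hC₁]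
    apply Real.sqrt_pos.mpr
    have : (0:ℝ) < cm ^ 2 * δ ^ 5 * κ :=
      mul_pos (mul_pos (pow_pos hcmpos 2) (pow_pos hδpos 5)) hκpos
    linarith only [this]
  obtain ⟨Θa, hΘa⟩ : ∃ Θa : ℝ, Θa = 8 * Real.sqrt β₁ * KH / (β₂ * β₁ * δ) := ⟨_, rfl⟩
  obtain ⟨Θb, hΘb⟩ : ∃ Θb : ℝ, Θb = 8 * β₂ * KH / (Real.sqrt β₁ * β₁ ^ 2 * δ) := ⟨_, rfl⟩
  have hsβpos : 0 < Real.sqrt β₁ := Real.sqrt_pos.mpr hβ₁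
  have hΘapos : 0 < Θa := by
    rw [hΘa]
    exact div_pos (by positivity) (by positivity)
  have hΘbpos : 0 < Θb := by
    rw [hΘb]
    exact div_pos (by positivity) (by positivity)
  refine ⟨C₁, hC₁pos, max 1 (max ((2 * δ / ρ) ^ 2) (max (Θa ^ 2) (Θb ^ 2))), by positivity, ?_⟩
  intro t ht i hi
  have ht1 : (1:ℝ) ≤ t := le_trans (le_max_left _ _) ht
  have ht0 : (0:ℝ) < t := lt_of_lt_of_le one_pos ht1
  have hst : 0 < Real.sqrt t := Real.sqrt_pos.mpr ht0
  have hstsq : Real.sqrt t ^ 2 = t := Real.sq_sqrt ht0.le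
  have hsqT : ∀ e : ℝ, 0 ≤ e → e ^ 2 ≤ t → e ≤ Real.sqrt t := by
    intro e he h
    calc e = Real.sqrt (e ^ 2) := (Real.sqrt_sq he).symm
      _ ≤ Real.sqrt t := Real.sqrt_le_sqrt h
  have hTρ : 2 * δ / ρ ≤ Real.sqrt t :=
    hsqT _ (by positivity) (le_trans (le_trans (le_max_left _ _) (le_max_right 1 _)) ht)
  have hTa' : Θa ≤ Real.sqrt t :=
    hsqT _ hΘapos.le
      (le_trans (le_trans (le_trans (le_max_left _ _) (le_max_right _ _)) (le_max_right 1 _)) ht)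
  have hTb' : Θb ≤ Real.sqrt t :=
    hsqT _ hΘbpos.le
      (le_trans (le_trans (le_trans (le_max_right _ _) (le_max_right _ _)) (le_max_right 1 _)) ht)
  -- the small ball inside the annulus
  obtain ⟨δ', hδ'⟩ : ∃ δ' : ℝ, δ' = δ / Real.sqrt t := ⟨_, rfl⟩
  have hδ'pos : 0 < δ' := by rw [hδ']; positivity
  have h2δ' : 2 * δ' ≤ ρ := by
    rw [hδ', mul_div_assoc']
    rw [div_le_iff₀ hρpos] at hTρ
    rw [div_le_iff₀ hst]
    linarith only [hTρ]
  obtain ⟨ξc, hξc⟩ : ∃ ξc : EuclideanSpace ℝ (Fin 3),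
      ξc = (3 / 2 * δ') • (EuclideanSpace.single (0 : Fin 3) (1:ℝ)) := ⟨_, rfl⟩
  have hξcn : ‖ξc‖ = 3 / 2 * δ' := by
    rw [hξc, norm_smul, EuclideanSpace.norm_single, norm_one, mul_one, Real.norm_eq_abs,
      abs_of_nonneg (by linarith only [hδ'pos] : (0:ℝ) ≤ 3 / 2 * δ')]
  have hshell : ∀ ξ ∈ Metric.closedBall ξc (δ' / 2), δ' ≤ ‖ξ‖ ∧ ‖ξ‖ ≤ 2 * δ' := by
    intro ξ hξ
    rw [Metric.mem_closedBall, dist_eq_norm] at hξ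
    have h1 := abs_norm_sub_norm_le ξ ξc
    have h2 := (abs_le.mp (h1.trans hξ))
    constructor
    · linarith only [h2.1, hξcn.le, hξcn.ge, hδ'pos]
    · linarith only [h2.2, hξcn.le, hξcn.ge, hδ'pos]
  have hsub : Metric.closedBall ξc (δ' / 2) ⊆ Metric.closedBall (0 : EuclideanSpace ℝ (Fin 3)) 1 := by
    intro ξ hξ
    rw [Metric.mem_closedBall, dist_zero_right]
    have h := (hshell ξ hξ).2
    linarith only [h, h2δ', hρ1]
  -- pointwise lower bound on the small ball
  have hpoint : ∀ ξ ∈ Metric.closedBall ξc (δ' / 2),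
      cm * c₀ * (δ * Real.sqrt t) ≤ solfn (A1 β₁ β₂ β₂ β₄ σp σm νp νm ‖ξ‖) (u₀ ξ) t 0
        ∧ solfn (A1 β₁ β₂ β₂ β₄ σp σm νp νm ‖ξ‖) (u₀ ξ) t 2
            ≤ -(cm * c₀ * (δ * Real.sqrt t)) := by
    intro ξ hξ
    obtain ⟨hs1, hs2⟩ := hshell ξ hξ
    have hξ1 : ‖ξ‖ ≤ 1 := by linarith only [hs2, h2δ', hρ1]
    obtain ⟨hz0, hz1, hz2⟩ := hvan ξ hξ1
    have hξρ : ‖ξ‖ ≤ ρ := by linarith only [hs2, h2δ']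
    have hv3 : |u₀ ξ 3 - c₀| ≤ c₀ / 2 :=
      le_trans (hMb ξ hξ1) (hρs ‖ξ‖ (norm_nonneg ξ) hξρ)
    have hr1 : δ ≤ ‖ξ‖ * Real.sqrt t := by
      rw [hδ', div_le_iff₀ hst] at hs1
      linarith only [hs1]
    have hr2 : ‖ξ‖ * Real.sqrt t ≤ 2 * δ := by
      rw [hδ'] at hs2
      have h1 := mul_le_mul_of_nonneg_right hs2 hst.le
      have e : 2 * (δ / Real.sqrt t) * Real.sqrt t = 2 * δ := by field_simp
      linarith only [h1, e.le, e.ge]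
    have hδq' : 32 * (4 * (σp * β₂ + σm * β₁) + (νp * β₂ + νm * β₁)) * δ ^ 2 ≤ β₁ := by
      rw [← hKq]; exact hδq
    have hTa2 : 8 * Real.sqrt β₁ *
        ((2 * β₂ + 1 + 6 * (4 * (σp * β₁ + σm * β₂) + (νp * β₁ + νm * β₂))) * c₀)
        ≤ β₂ * β₁ * c₀ * (δ * Real.sqrt t) := by
      rw [← hKR, ← hKH]
      rw [hΘa, div_le_iff₀ (by positivity)] at hTa'
      have h1 := mul_le_mul_of_nonneg_right hTa' hc₀.le
      linarith only [h1]
    have hTb2 : 8 * β₂ *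
        ((2 * β₂ + 1 + 6 * (4 * (σp * β₁ + σm * β₂) + (νp * β₁ + νm * β₂))) * c₀)
        ≤ Real.sqrt β₁ * β₁ ^ 2 * c₀ * (δ * Real.sqrt t) := by
      rw [← hKR, ← hKH]
      rw [hΘb, div_le_iff₀ (by positivity)] at hTb'
      have h1 := mul_le_mul_of_nonneg_right hTb' hc₀.le
      linarith only [h1]
    have key := key_pointwise β₁ β₂ β₄ σp σm νp νm hβ₁ hβ₂ hβ₄ hσp hσm hνp hνm hββ
      ‖ξ‖ t δ c₀ (u₀ ξ) hz0 hz1 hz2 hc₀ hv3 hδpos hδ1 ht1 hr1 hr2 hδq' hTa2 hTb2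
    have hnum1 : β₁ * min β₁ β₂ * c₀ * (δ * Real.sqrt t)
        ≤ β₂ * β₁ * c₀ * (δ * Real.sqrt t) := by
      have h1 := mul_le_mul_of_nonneg_right (mul_le_mul_of_nonneg_right
        (mul_le_mul_of_nonneg_left (min_le_right β₁ β₂) hβ₁.le) hc₀.le)
        (by positivity : (0:ℝ) ≤ δ * Real.sqrt t)
      linarith only [h1]
    have hnum2 : β₁ * min β₁ β₂ * c₀ * (δ * Real.sqrt t)
        ≤ β₁ ^ 2 * c₀ * (δ * Real.sqrt t) := by
      have h1 := mul_le_mul_of_nonneg_right (mul_le_mul_of_nonneg_right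
        (mul_le_mul_of_nonneg_left (min_le_left β₁ β₂) hβ₁.le) hc₀.le)
        (by positivity : (0:ℝ) ≤ δ * Real.sqrt t)
      linarith only [h1]
    have he : cm * c₀ * (δ * Real.sqrt t)
        = β₁ * min β₁ β₂ * c₀ * (δ * Real.sqrt t) / (8 * (β₁ ^ 2 + β₂ ^ 2)) := by
      rw [hcm]; ring
    have hD : (0:ℝ) < 8 * (β₁ ^ 2 + β₂ ^ 2) := by positivity
    constructor
    · refine le_trans ?_ key.1
      rw [he]
      exact (div_le_div_iff_of_pos_right hD).mpr hnum1
    · refine le_trans key.2 ?_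
      rw [he]
      have h2 : β₁ * min β₁ β₂ * c₀ * (δ * Real.sqrt t) / (8 * (β₁ ^ 2 + β₂ ^ 2))
          ≤ β₁ ^ 2 * c₀ * (δ * Real.sqrt t) / (8 * (β₁ ^ 2 + β₂ ^ 2)) :=
        (div_le_div_iff_of_pos_right hD).mpr hnum2
      linarith only [h2]
  -- measurability and integrability
  have hmeas : Measurable (fun ξ : EuclideanSpace ℝ (Fin 3) =>
      (solfn (A1 β₁ β₂ β₂ β₄ σp σm νp νm ‖ξ‖) (u₀ ξ) t i) ^ 2) :=
    (solfn_measurable β₁ β₂ β₂ β₄ σp σm νp νm t i u₀ hu₀).pow_const 2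
  obtain ⟨CB, hCB0, hCB⟩ := solfn_bound β₁ β₂ β₂ β₄ σp σm νp νm t
  have hBnn : (0:ℝ) ≤ B := le_trans (abs_nonneg _) (hB 0 0)
  have hnorm : ∀ ξ : EuclideanSpace ℝ (Fin 3), ‖u₀ ξ‖ ≤ B := by
    intro ξ
    refine (pi_norm_le_iff_of_nonneg hBnn).mpr fun j => ?_
    rw [Real.norm_eq_abs]
    exact hB ξ j
  have hint : IntegrableOn (fun ξ : EuclideanSpace ℝ (Fin 3) =>
      (solfn (A1 β₁ β₂ β₂ β₄ σp σm νp νm ‖ξ‖) (u₀ ξ) t i) ^ 2)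
      (Metric.closedBall (0 : EuclideanSpace ℝ (Fin 3)) 1) volume := by
    apply Measure.integrableOn_of_bounded (M := (CB * B) ^ 2) measure_closedBall_lt_top.ne
      hmeas.aestronglyMeasurable
    refine (ae_restrict_mem measurableSet_closedBall).mono fun ξ hξ => ?_
    rw [Metric.mem_closedBall, dist_zero_right] at hξ
    have h1 := hCB ‖ξ‖ ⟨norm_nonneg ξ, hξ⟩ (u₀ ξ) i
    have h2 : |solfn (A1 β₁ β₂ β₂ β₄ σp σm νp νm ‖ξ‖) (u₀ ξ) t i| ≤ CB * B :=
      h1.trans (mul_le_mul_of_nonneg_left (hnorm ξ) hCB0)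
    rw [Real.norm_eq_abs, abs_pow]
    exact pow_le_pow_left₀ (abs_nonneg _) h2 2
  -- lower bound constant
  obtain ⟨cP, hcP⟩ : ∃ cP : ℝ, cP = cm * c₀ * (δ * Real.sqrt t) := ⟨_, rfl⟩
  have hcPpos : 0 < cP := by
    rw [hcP]
    exact mul_pos (mul_pos hcmpos hc₀) (mul_pos hδpos hst)
  have hlow : ∀ ξ ∈ Metric.closedBall ξc (δ' / 2),
      cP ^ 2 ≤ (solfn (A1 β₁ β₂ β₂ β₄ σp σm νp νm ‖ξ‖) (u₀ ξ) t i) ^ 2 := by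
    intro ξ hξ
    obtain ⟨hA, hB2⟩ := hpoint ξ hξ
    rcases hi with rfl | rfl
    · rw [hcP]
      exact pow_le_pow_left₀ (by rw [← hcP]; exact hcPpos.le) hA 2
    · rw [hcP]
      have hy : cm * c₀ * (δ * Real.sqrt t)
          ≤ -(solfn (A1 β₁ β₂ β₂ β₄ σp σm νp νm ‖ξ‖) (u₀ ξ) t 2) := by
        linarith only [hB2]
      have h3 := pow_le_pow_left₀ (by rw [← hcP]; exact hcPpos.le) hy 2
      have e := neg_sq (solfn (A1 β₁ β₂ β₂ β₄ σp σm νp νm ‖ξ‖) (u₀ ξ) t 2)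
      linarith only [h3, e.le, e.ge]
  have hμSB : (volume (Metric.closedBall ξc (δ' / 2))).toReal = (δ' / 2) ^ 3 * κ := by
    rw [Measure.addHaar_closedBall _ _ (by positivity : (0:ℝ) ≤ δ' / 2)]
    rw [ENNReal.toReal_mul, ENNReal.toReal_ofReal (by positivity)]
    rw [hκ]
    norm_num [finrank_euclideanSpace]
  have hstep2 : cP ^ 2 * (volume (Metric.closedBall ξc (δ' / 2))).toReal
      ≤ ∫ ξ in Metric.closedBall ξc (δ' / 2),
          (solfn (A1 β₁ β₂ β₂ β₄ σp σm νp νm ‖ξ‖) (u₀ ξ) t i) ^ 2 :=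
    by have := setIntegral_ge_of_const_le measurableSet_closedBall measure_closedBall_lt_top.ne hlow
         (hint.mono_set hsub)
       rwa [smul_eq_mul, mul_comm, measureReal_def] at this
  have hstep1 : (∫ ξ in Metric.closedBall ξc (δ' / 2),
        (solfn (A1 β₁ β₂ β₂ β₄ σp σm νp νm ‖ξ‖) (u₀ ξ) t i) ^ 2)
      ≤ ∫ ξ in Metric.closedBall (0 : EuclideanSpace ℝ (Fin 3)) 1,
          (solfn (A1 β₁ β₂ β₂ β₄ σp σm νp νm ‖ξ‖) (u₀ ξ) t i) ^ 2 :=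
    setIntegral_mono_set hint (Filter.Eventually.of_forall fun ξ => sq_nonneg _)
      (HasSubset.Subset.eventuallyLE hsub)
  have hIlow : cP ^ 2 * ((δ' / 2) ^ 3 * κ)
      ≤ ∫ ξ in Metric.closedBall (0 : EuclideanSpace ℝ (Fin 3)) 1,
          (solfn (A1 β₁ β₂ β₂ β₄ σp σm νp νm ‖ξ‖) (u₀ ξ) t i) ^ 2 := by
    rw [← hμSB]
    exact le_trans hstep2 hstep1
  -- conclusion
  show Real.sqrt (∫ ξ in Metric.closedBall (0 : EuclideanSpace ℝ (Fin 3)) 1,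
      (solfn (A1 β₁ β₂ β₂ β₄ σp σm νp νm ‖ξ‖) (u₀ ξ) t i) ^ 2)
      ≥ C₁ * c₀ * (1 + t) ^ (-(1 / 4 : ℝ))
  rw [ge_iff_le]
  have hlhs0 : 0 ≤ C₁ * c₀ * (1 + t) ^ (-(1 / 4 : ℝ)) :=
    mul_nonneg (mul_nonneg hC₁pos.le hc₀.le)
      (Real.rpow_nonneg (by linarith only [ht0]) _)
  have hfin : (C₁ * c₀ * (1 + t) ^ (-(1 / 4 : ℝ))) ^ 2 ≤ cP ^ 2 * ((δ' / 2) ^ 3 * κ) := by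
    have e1 : ((1 + t) ^ (-(1 / 4 : ℝ))) ^ 2 = (1 + t) ^ (-(1 / 2 : ℝ)) := by
      rw [← Real.rpow_natCast ((1 + t) ^ (-(1 / 4 : ℝ))) 2,
        ← Real.rpow_mul (by linarith only [ht0] : (0:ℝ) ≤ 1 + t)]
      norm_num
    have e2 : C₁ ^ 2 = cm ^ 2 * δ ^ 5 * κ / 8 := by
      rw [hC₁]
      exact Real.sq_sqrt (by positivity)
    have e4 : (1 + t) ^ (-(1 / 2 : ℝ)) ≤ (Real.sqrt t)⁻¹ := by
      rw [Real.rpow_neg (by linarith only [ht0] : (0:ℝ) ≤ 1 + t), ← Real.sqrt_eq_rpow]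
      exact inv_anti₀ hst (Real.sqrt_le_sqrt (by linarith only [ht0]))
    have e5 : cP ^ 2 * ((δ' / 2) ^ 3 * κ)
        = cm ^ 2 * δ ^ 5 * κ / 8 * c₀ ^ 2 * (Real.sqrt t)⁻¹ := by
      rw [hcP, hδ']
      field_simp
      ring
    calc (C₁ * c₀ * (1 + t) ^ (-(1 / 4 : ℝ))) ^ 2
        = C₁ ^ 2 * c₀ ^ 2 * ((1 + t) ^ (-(1 / 4 : ℝ))) ^ 2 := by ring
      _ = cm ^ 2 * δ ^ 5 * κ / 8 * c₀ ^ 2 * (1 + t) ^ (-(1 / 2 : ℝ)) := by rw [e1, e2]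
      _ ≤ cm ^ 2 * δ ^ 5 * κ / 8 * c₀ ^ 2 * (Real.sqrt t)⁻¹ :=
          mul_le_mul_of_nonneg_left e4 (by positivity)
      _ = cP ^ 2 * ((δ' / 2) ^ 3 * κ) := e5.symm
  exact (Real.le_sqrt hlhs0 (le_trans (by positivity) hIlow)).mpr (le_trans hfin hIlow)
end

section
/- For all θ > 0, a > 0, η > 0 and M > 0 there exist C > 0 and T ≥ 1 such that for every continuous function ψ : [0, η] → ℝ satisfying |ψ(r)| ≤ M r³ for all r ∈ [0, η], and every t ≥ T: ∫_{ξ ∈ ℝ³, |ξ| ≤ η} e^{−θ|ξ|² t} cos²( (a|ξ| + ψ(|ξ|)) t ) dξ ≥ C t^{−3/2}. -/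
open MeasureTheory

private lemma cos_sq_lip' (x y : ℝ) : |Real.cos x ^ 2 - Real.cos y ^ 2| ≤ |x - y| := by
  have h1 : Real.cos x ^ 2 - Real.cos y ^ 2 = (Real.cos (2*x) - Real.cos (2*y)) / 2 := by
    rw [Real.cos_sq, Real.cos_sq]; ring
  have h2 : Real.cos (2*x) - Real.cos (2*y)
      = -2 * Real.sin ((2*x + 2*y)/2) * Real.sin ((2*x - 2*y)/2) := Real.cos_sub_cos _ _
  rw [h1, h2]
  have hs1 : |Real.sin ((2*x + 2*y)/2)| ≤ 1 := Real.abs_sin_le_one _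
  have hs2 : |Real.sin ((2*x - 2*y)/2)| ≤ |(2*x - 2*y)/2| := Real.abs_sin_le_abs
  calc |(-2 * Real.sin ((2*x+2*y)/2) * Real.sin ((2*x-2*y)/2)) / 2|
      = |Real.sin ((2*x+2*y)/2)| * |Real.sin ((2*x-2*y)/2)| := by
        rw [abs_div, abs_mul, abs_mul]; simp [abs_of_nonneg]; ring
    _ ≤ 1 * |(2*x - 2*y)/2| := mul_le_mul hs1 hs2 (abs_nonneg _) zero_le_one
    _ = |x - y| := by rw [one_mul]; congr 1; ring

private lemma hasDeriv_cos_sq' (b r : ℝ) (hb : b ≠ 0) :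
    HasDerivAt (fun r => r/2 + Real.sin (2*b*r)/(4*b)) (Real.cos (b*r) ^ 2) r := by
  have h1 : HasDerivAt (fun r : ℝ => 2*b*r) (2*b) r := by
    simpa using (hasDerivAt_id r).const_mul (2*b)
  have h2 := (h1.sin).div_const (4*b)
  have h3 := ((hasDerivAt_id r).div_const 2).add h2
  refine h3.congr_deriv ?_; symm
  rw [Real.cos_sq]
  field_simp
  ring

set_option maxHeartbeats 1000000 in
/-- Oscillatory Gaussian lower bound: for all `θ, a, η, M > 0` there are `C > 0` and
`T ≥ 1` such that for every continuous `ψ : [0,η] → ℝ` with `|ψ(r)| ≤ M r³` and all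
`t ≥ T`, `∫_{|ξ|≤η} e^{-θ|ξ|²t} cos²((a|ξ| + ψ(|ξ|)) t) dξ ≥ C t^{-3/2}`. -/
theorem oscillatory_gaussian_lower_bound
    (θ a η M : ℝ) (hθ : 0 < θ) (ha : 0 < a) (hη : 0 < η) (hM : 0 < M) :
    ∃ C > 0, ∃ T : ℝ, 1 ≤ T ∧
      ∀ ψ : ℝ → ℝ, ContinuousOn ψ (Set.Icc 0 η) →
        (∀ r ∈ Set.Icc (0 : ℝ) η, |ψ r| ≤ M * r ^ 3) →
        ∀ t : ℝ, T ≤ t →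
          (∫ ξ in Metric.closedBall (0 : EuclideanSpace ℝ (Fin 3)) η,
              Real.exp (-θ * ‖ξ‖ ^ 2 * t) * Real.cos ((a * ‖ξ‖ + ψ ‖ξ‖) * t) ^ 2)
            ≥ C * t ^ (-(3 / 2 : ℝ)) := by
  set E := EuclideanSpace ℝ (Fin 3)
  set V : ℝ := (volume (Metric.ball (0 : E) 1)).toReal with hV
  have hVpos : 0 < V := by
    refine ENNReal.toReal_pos (ne_of_gt ?_) (ne_of_lt measure_ball_lt_top)
    exact Metric.measure_ball_pos _ _ one_pos
  refine ⟨3 * V * Real.exp (-(4*θ)) / 4, by positivity, 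
    max 1 (max (4/η^2) ((2/a + 15*M)^2)), le_max_left _ _, ?_⟩
  intro ψ hψc hψb t ht
  have ht1 : (1:ℝ) ≤ t := le_trans (le_max_left _ _) ht
  have ht0 : (0:ℝ) < t := lt_of_lt_of_le one_pos ht1
  have hst : (0:ℝ) < Real.sqrt t := Real.sqrt_pos.2 ht0
  have hst1 : (1:ℝ) ≤ Real.sqrt t := by
    rw [show (1:ℝ) = Real.sqrt 1 by simp]; exact Real.sqrt_le_sqrt ht1
  -- √t ≥ 2/η
  have hsη : 2/η ≤ Real.sqrt t := by
    have h1 : (4/η^2) ≤ t := le_trans (le_trans (le_max_left _ _) (le_max_right _ _)) ht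
    have := Real.sqrt_le_sqrt h1
    rwa [show (4/η^2 : ℝ) = (2/η)^2 by ring, Real.sqrt_sq (by positivity)] at this
  have hsA : 2/a + 15*M ≤ Real.sqrt t := by
    have h1 : ((2/a + 15*M)^2) ≤ t := le_trans (le_trans (le_max_right _ _) (le_max_right _ _)) ht
    have := Real.sqrt_le_sqrt h1
    rwa [Real.sqrt_sq (by positivity)] at this
  set c : ℝ := 1 / Real.sqrt t with hc
  set d : ℝ := 2 / Real.sqrt t with hd
  have hc0 : 0 < c := by positivity
  have hcd : c ≤ d := by
    rw [hc, hd]; gcongr; norm_num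
  have hdη : d ≤ η := by
    rw [hd, div_le_iff₀ hst]
    calc (2:ℝ) = (2/η) * η := by field_simp
      _ ≤ Real.sqrt t * η := by gcongr
      _ = η * Real.sqrt t := mul_comm _ _
  have hIccsub : Set.Icc c d ⊆ Set.Icc 0 η := fun y hy =>
    ⟨le_trans hc0.le hy.1, le_trans hy.2 hdη⟩
  -- the radial profile
  set g : ℝ → ℝ := fun r => Real.exp (-θ * r^2 * t) * Real.cos ((a*r + ψ r)*t)^2 with hg
  set f : ℝ → ℝ := Set.indicator (Set.Icc 0 η) g with hf
  have hgcont : ContinuousOn g (Set.Icc 0 η) := by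
    apply ContinuousOn.mul
    · exact (Real.continuous_exp.comp (by continuity)).continuousOn
    · exact ((Real.continuous_cos.comp_continuousOn
        (((continuousOn_id.const_smul a).add hψc).mul continuousOn_const)).pow 2)
  -- Step A: ball integral = integral of f ∘ norm
  have hA : (∫ ξ in Metric.closedBall (0 : E) η,
      Real.exp (-θ * ‖ξ‖ ^ 2 * t) * Real.cos ((a * ‖ξ‖ + ψ ‖ξ‖) * t) ^ 2)
      = ∫ x : E, f ‖x‖ := by
    rw [← integral_indicator (measurableSet_closedBall)]
    congr 1; funext x
    by_cases hx : ‖x‖ ≤ η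
    · rw [Set.indicator_of_mem (mem_closedBall_zero_iff.2 hx),
        hf, Set.indicator_of_mem (Set.mem_Icc.2 ⟨norm_nonneg x, hx⟩)]
    · rw [Set.indicator_of_notMem (fun h => hx (mem_closedBall_zero_iff.1 h)),
        hf, Set.indicator_of_notMem (fun h => hx h.2)]
  -- Step B: polar coordinates
  have hB : ∫ x : E, f ‖x‖ = 3 * (V * ∫ y in Set.Ioi (0:ℝ), y ^ 2 * f y) := by
    have h3 : Module.finrank ℝ E = 3 := finrank_euclideanSpace_fin
    have := integral_fun_norm_addHaar (volume : Measure E) f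
    rw [h3] at this
    simp only [smul_eq_mul, nsmul_eq_mul] at this
    norm_num at this
    rw [this, hV]
    rfl
  -- Step C : lower bound for the radial integral
  set F : ℝ → ℝ := fun y => y ^ 2 * f y with hF
  have hFind : ∀ y, F y = Set.indicator (Set.Icc 0 η) (fun y => y ^ 2 * g y) y := by
    intro y
    by_cases hy : y ∈ Set.Icc 0 η
    · simp only [hF, hf, Set.indicator_of_mem hy]
    · simp only [hF, hf, Set.indicator_of_notMem hy, mul_zero]
  have hhcont : ContinuousOn (fun y : ℝ => y ^ 2 * g y) (Set.Icc 0 η) :=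
    (continuous_pow 2).continuousOn.mul hgcont
  have hFint : IntegrableOn F (Set.Ioi (0:ℝ)) := by
    have h1 : Integrable (Set.indicator (Set.Icc 0 η) (fun y : ℝ => y ^ 2 * g y)) :=
      (hhcont.integrableOn_Icc).integrable_indicator measurableSet_Icc
    have h2 : F = Set.indicator (Set.Icc 0 η) (fun y : ℝ => y ^ 2 * g y) := funext hFind
    rw [h2]
    exact h1.integrableOn
  have hgnn : ∀ y, 0 ≤ g y := by
    intro y; rw [hg]; positivity
  have hFnn : ∀ y, 0 ≤ F y := by
    intro y
    rw [hFind]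
    apply Set.indicator_nonneg
    intro y _
    exact mul_nonneg (sq_nonneg _) (hgnn y)
  have step1 : ∫ y in Set.Icc c d, F y ≤ ∫ y in Set.Ioi (0:ℝ), F y := by
    apply setIntegral_mono_set hFint (Filter.Eventually.of_forall hFnn)
    exact HasSubset.Subset.eventuallyLE (fun y hy => lt_of_lt_of_le hc0 hy.1)
  have step2 : ∫ y in Set.Icc c d, F y = ∫ y in Set.Icc c d, y ^ 2 * g y := by
    apply setIntegral_congr_fun measurableSet_Icc
    intro y hy
    rw [hFind, Set.indicator_of_mem (hIccsub hy)]
  -- the comparison function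
  set L : ℝ → ℝ := fun y => Real.exp (-(4*θ))/t * (Real.cos (a*t*y) ^ 2 - M*t*y^3) with hL
  have hcoscont : Continuous (fun y : ℝ => Real.cos (a*t*y) ^ 2) :=
    (Real.continuous_cos.comp (continuous_const.mul continuous_id)).pow 2
  have hcubecont : Continuous (fun y : ℝ => M*t*y^3) :=
    continuous_const.mul (continuous_pow 3)
  have hLcont : Continuous L := by
    rw [hL]
    exact continuous_const.mul (hcoscont.sub hcubecont)
  have hpt : ∀ y ∈ Set.Icc c d, L y ≤ y ^ 2 * g y := by
    intro y hy
    have hy0 : 0 < y := lt_of_lt_of_le hc0 hy.1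
    have hysq1 : 1/t ≤ y ^ 2 := by
      have h1 : c ^ 2 ≤ y ^ 2 := pow_le_pow_left₀ hc0.le hy.1 2
      have h2 : c ^ 2 = 1/t := by
        rw [hc, div_pow, one_pow, Real.sq_sqrt ht0.le]
      linarith
    have hysq2 : y ^ 2 ≤ 4/t := by
      have h1 : y ^ 2 ≤ d ^ 2 := pow_le_pow_left₀ hy0.le hy.2 2
      have h2 : d ^ 2 = 4/t := by
        rw [hd, div_pow, Real.sq_sqrt ht0.le]; norm_num
      linarith
    have hexp : Real.exp (-(4*θ)) ≤ Real.exp (-θ * y^2 * t) := by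
      apply Real.exp_le_exp.2
      have : θ * (y^2 * t) ≤ θ * 4 := by
        apply mul_le_mul_of_nonneg_left _ hθ.le
        calc y^2 * t ≤ (4/t) * t := by gcongr
          _ = 4 := by field_simp
      nlinarith
    have hcos : Real.cos (a*t*y) ^ 2 - M*t*y^3 ≤ Real.cos ((a*y + ψ y)*t) ^ 2 := by
      have hlip := cos_sq_lip' (a*t*y) ((a*y + ψ y)*t)
      have hdiff : |a*t*y - (a*y + ψ y)*t| ≤ M*t*y^3 := by
        have h1 : a*t*y - (a*y + ψ y)*t = -(ψ y * t) := by ring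
        rw [h1, abs_neg, abs_mul, abs_of_pos ht0]
        have h2 := hψb y (hIccsub hy)
        calc |ψ y| * t ≤ (M * y^3) * t := by gcongr
          _ = M*t*y^3 := by ring
      have := abs_le.1 (le_trans hlip hdiff)
      linarith [this.1]
    rcases le_or_gt (Real.cos (a*t*y) ^ 2 - M*t*y^3) 0 with hK | hK
    · have h1 : L y ≤ 0 := by
        rw [hL]
        exact mul_nonpos_of_nonneg_of_nonpos (by positivity) hK
      exact le_trans h1 (mul_nonneg (sq_nonneg _) (hgnn y))
    · have h1 : Real.exp (-(4*θ))/t ≤ y^2 * Real.exp (-θ * y^2 * t) := by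
        calc Real.exp (-(4*θ))/t = (1/t) * Real.exp (-(4*θ)) := by ring
          _ ≤ y^2 * Real.exp (-θ * y^2 * t) :=
            mul_le_mul hysq1 hexp (Real.exp_pos _).le (sq_nonneg _)
      calc L y = (Real.exp (-(4*θ))/t) * (Real.cos (a*t*y) ^ 2 - M*t*y^3) := rfl
        _ ≤ (y^2 * Real.exp (-θ * y^2 * t)) * Real.cos ((a*y + ψ y)*t) ^ 2 := by
            apply mul_le_mul h1 hcos hK.le
            positivity
        _ = y ^ 2 * g y := by rw [hg]; ring
  have step3 : ∫ y in Set.Icc c d, L y ≤ ∫ y in Set.Icc c d, y ^ 2 * g y :=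
    setIntegral_mono_on (hLcont.integrableOn_Icc)
      ((hhcont.mono hIccsub).integrableOn_Icc) measurableSet_Icc hpt
  -- compute the integral of L
  have hat : (0:ℝ) < a * t := by positivity
  have hIcos : ∫ y in c..d, Real.cos (a*t*y) ^ 2
      = (d/2 + Real.sin (2*(a*t)*d)/(4*(a*t))) - (c/2 + Real.sin (2*(a*t)*c)/(4*(a*t))) := by
    exact intervalIntegral.integral_eq_sub_of_hasDerivAt
      (f := fun r => r/2 + Real.sin (2*(a*t)*r)/(4*(a*t)))
      (fun r _ => hasDeriv_cos_sq' (a*t) r hat.ne')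
      (hcoscont.intervalIntegrable _ _)
  have hIpow : ∫ y in c..d, y ^ 3 = (d ^ 4 - c ^ 4)/4 := by
    rw [integral_pow]; norm_num
  have hLint : ∫ y in Set.Icc c d, L y
      = Real.exp (-(4*θ))/t * (((d/2 + Real.sin (2*(a*t)*d)/(4*(a*t)))
          - (c/2 + Real.sin (2*(a*t)*c)/(4*(a*t)))) - M*t*((d ^ 4 - c ^ 4)/4)) := by
    rw [MeasureTheory.integral_Icc_eq_integral_Ioc,
      ← intervalIntegral.integral_of_le hcd]
    rw [hL]
    rw [intervalIntegral.integral_const_mul]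
    congr 1
    rw [intervalIntegral.integral_sub]
    · rw [hIcos, ← hIpow, ← intervalIntegral.integral_const_mul]
    · exact hcoscont.intervalIntegrable _ _
    · exact hcubecont.intervalIntegrable _ _
  -- arithmetic lower bound
  have harith : Real.exp (-(4*θ))/4 * (1/(t * Real.sqrt t)) ≤ ∫ y in Set.Icc c d, L y := by
    rw [hLint]
    set s := Real.sqrt t with hs
    have hs0 : 0 < s := hst
    have hts : t = s * s := (Real.mul_self_sqrt ht0.le).symm
    have hE : (0:ℝ) < Real.exp (-(4*θ)) := Real.exp_pos _
    have hb1 : (-1)/(4*(a*t)) ≤ Real.sin (2*(a*t)*d)/(4*(a*t)) := by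
      gcongr
      exact Real.neg_one_le_sin _
    have hb2 : Real.sin (2*(a*t)*c)/(4*(a*t)) ≤ 1/(4*(a*t)) := by
      gcongr
      exact Real.sin_le_one _
    have hcube : M*t*((d ^ 4 - c ^ 4)/4) = 15*M/(4*t) := by
      rw [hc, hd, hts]
      field_simp
      ring
    have hdc : d/2 - c/2 = 1/(2*s) := by
      rw [hc, hd]
      field_simp
      ring
    have h4 : 1/(4*(a*t)) + 1/(4*(a*t)) = 1/(2*(a*t)) := by
      field_simp
      ring
    have hsA' : 2 + 15*M*a ≤ a*s := by
      have := mul_le_mul_of_nonneg_left hsA ha.le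
      have h5 : a * (2/a) = 2 := by field_simp
      nlinarith
    have h2 : 1/(4*s) + 1/(2*(a*t)) + 15*M/(4*t) ≤ 1/(2*s) := by
      have heq : 1/(2*s) - (1/(4*s) + 1/(2*(a*t)) + 15*M/(4*t))
          = (a*s - 2 - 15*M*a)/(4*a*(s*s)) := by
        rw [hts]
        field_simp
        ring
      have hge : 0 ≤ (a*s - 2 - 15*M*a)/(4*a*(s*s)) := by
        apply div_nonneg _ (by positivity)
        linarith
      linarith
    have hA : 1/(4*s) ≤ ((d/2 + Real.sin (2*(a*t)*d)/(4*(a*t)))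
        - (c/2 + Real.sin (2*(a*t)*c)/(4*(a*t)))) - M*t*((d ^ 4 - c ^ 4)/4) := by
      rw [hcube]
      ring_nf at hb1 hb2 h4 h2 hdc ⊢
      linarith
    calc Real.exp (-(4*θ))/4 * (1/(t * s)) = Real.exp (-(4*θ))/t * (1/(4*s)) := by
          rw [hts]; field_simp
      _ ≤ _ := mul_le_mul_of_nonneg_left hA (by positivity)
  -- final assembly
  have hrpow : t ^ (-(3/2 : ℝ)) = 1/(t * Real.sqrt t) := by
    have h1 : t ^ ((3/2 : ℝ)) = t * Real.sqrt t := by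
      rw [show (3/2:ℝ) = 1 + 1/2 by norm_num, Real.rpow_add ht0, Real.rpow_one,
        ← Real.sqrt_eq_rpow]
    rw [Real.rpow_neg ht0.le, h1, one_div]
  rw [hA, hB, hrpow]
  have hfinal : Real.exp (-(4*θ))/4 * (1/(t * Real.sqrt t)) ≤ ∫ y in Set.Ioi (0:ℝ), F y := by
    calc Real.exp (-(4*θ))/4 * (1/(t * Real.sqrt t)) ≤ ∫ y in Set.Icc c d, L y := harith
      _ ≤ ∫ y in Set.Icc c d, y ^ 2 * g y := step3
      _ = ∫ y in Set.Icc c d, F y := step2.symm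
      _ ≤ _ := step1
  calc 3 * V * Real.exp (-(4*θ)) / 4 * (1/(t * Real.sqrt t))
      = 3 * (V * (Real.exp (-(4*θ))/4 * (1/(t * Real.sqrt t)))) := by ring
    _ ≤ 3 * (V * ∫ y in Set.Ioi (0:ℝ), F y) := by
        apply mul_le_mul_of_nonneg_left _ (by norm_num)
        exact mul_le_mul_of_nonneg_left hfinal hVpos.le
end

section
/- Let γ⁺ ≥ 1, γ⁻ ≥ 1, A⁺ > 0, A⁻ > 0, R⁺ > 0 and R⁻ > 0 be real numbers. Define φ : (R⁺, ∞) → ℝ by φ(ρ) = A⁺ ρ^{γ⁺} − A⁻ ( R⁻ ρ / (ρ − R⁺) )^{γ⁻}. Then φ is strictly monotone increasing on (R⁺, ∞), and there exists a unique ρ̃ ∈ (R⁺, ∞) with φ(ρ̃) = 0. -/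
/-- The common-pressure constraint of the two-fluid model:
`φ(ρ) = A⁺ ρ^{γ⁺} − A⁻ (R⁻ρ/(ρ−R⁺))^{γ⁻}` is strictly increasing on `(R⁺, ∞)` and
has a unique zero there. -/
theorem pressure_constraint_strictMono_and_unique_root
    (γp γm Ap Am Rp Rm : ℝ)
    (hγp : 1 ≤ γp) (hγm : 1 ≤ γm) (hAp : 0 < Ap) (hAm : 0 < Am)
    (hRp : 0 < Rp) (hRm : 0 < Rm)
    (φ : ℝ → ℝ)
    (hφ : ∀ ρ ∈ Set.Ioi Rp, φ ρ = Ap * ρ ^ γp - Am * (Rm * ρ / (ρ - Rp)) ^ γm) :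
    StrictMonoOn φ (Set.Ioi Rp) ∧ ∃! ρ : ℝ, ρ ∈ Set.Ioi Rp ∧ φ ρ = 0 := by
  have hγp0 : (0:ℝ) < γp := lt_of_lt_of_le one_pos hγp
  have hγm0 : (0:ℝ) < γm := lt_of_lt_of_le one_pos hγm
  -- strict monotonicity
  have hmono : StrictMonoOn φ (Set.Ioi Rp) := by
    intro a ha b hb hab
    rw [Set.mem_Ioi] at ha hb
    have ha0 : 0 < a := hRp.trans ha
    have hb0 : 0 < b := hRp.trans hb
    have haR : 0 < a - Rp := sub_pos.2 ha
    have hbR : 0 < b - Rp := sub_pos.2 hb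
    rw [hφ a ha, hφ b hb]
    have h1 : Ap * a ^ γp < Ap * b ^ γp := by
      have := Real.rpow_lt_rpow ha0.le hab hγp0
      exact mul_lt_mul_of_pos_left this hAp
    have hbase : Rm * b / (b - Rp) < Rm * a / (a - Rp) := by
      rw [div_lt_div_iff₀ hbR haR]
      have : b * a - b * Rp < a * b - a * Rp := by nlinarith
      nlinarith
    have hbpos : 0 < Rm * b / (b - Rp) := by positivity
    have h2 : Am * (Rm * b / (b - Rp)) ^ γm < Am * (Rm * a / (a - Rp)) ^ γm := by
      have := Real.rpow_lt_rpow hbpos.le hbase hγm0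
      exact mul_lt_mul_of_pos_left this hAm
    linarith
  refine ⟨hmono, ?_⟩
  -- choose a with φ a < 0
  set D : ℝ := max 1 ((Ap * (Rp + 1) ^ γp + 1) / Am) with hD
  have hD1 : (1:ℝ) ≤ D := le_max_left _ _
  have hD0 : (0:ℝ) < D := lt_of_lt_of_le one_pos hD1
  set a : ℝ := Rp + min 1 (Rm * Rp / D) with ha_def
  have hmin_pos : 0 < min 1 (Rm * Rp / D) := lt_min one_pos (by positivity)
  have haR : Rp < a := ha_def ▸ lt_add_of_pos_right Rp hmin_pos
  have ha0 : 0 < a := hRp.trans haR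
  have haRsub : a - Rp = min 1 (Rm * Rp / D) := by simp [ha_def]
  have ha_lt : a ≤ Rp + 1 := by
    rw [ha_def]; exact add_le_add_right (min_le_left _ _) _
  have hφa : φ a < 0 := by
    rw [hφ a haR]
    have h1 : Ap * a ^ γp ≤ Ap * (Rp + 1) ^ γp := by
      have := Real.rpow_le_rpow ha0.le ha_lt hγp0.le
      exact mul_le_mul_of_nonneg_left this hAp.le
    have hDle : D ≤ Rm * a / (a - Rp) := by
      rw [haRsub, le_div_iff₀ hmin_pos]
      calc D * min 1 (Rm * Rp / D) ≤ D * (Rm * Rp / D) :=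
            mul_le_mul_of_nonneg_left (min_le_right _ _) hD0.le
        _ = Rm * Rp := by field_simp
        _ ≤ Rm * a := by nlinarith
    have hDrp : D ≤ (Rm * a / (a - Rp)) ^ γm := by
      calc D = D ^ (1:ℝ) := (Real.rpow_one D).symm
        _ ≤ D ^ γm := Real.rpow_le_rpow_of_exponent_le hD1 hγm
        _ ≤ (Rm * a / (a - Rp)) ^ γm := Real.rpow_le_rpow hD0.le hDle hγm0.le
    have h2 : Ap * (Rp + 1) ^ γp + 1 ≤ Am * (Rm * a / (a - Rp)) ^ γm := by
      have : (Ap * (Rp + 1) ^ γp + 1) / Am ≤ D := le_max_right _ _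
      have h3 : Ap * (Rp + 1) ^ γp + 1 ≤ Am * D := by
        rw [div_le_iff₀ hAm] at this; linarith
      have := mul_le_mul_of_nonneg_left hDrp hAm.le
      linarith
    linarith
  -- choose b with φ b > 0
  set C : ℝ := Am * (max (2 * Rm) 1) ^ γm with hC
  have hC0 : 0 < C := by positivity
  set b : ℝ := max (2 * Rp) (max 1 ((C + 1) / Ap)) with hb_def
  have hb2Rp : 2 * Rp ≤ b := le_max_left _ _
  have hbRp : Rp < b := by linarith
  have hb1 : (1:ℝ) ≤ b := le_trans (le_max_left _ _) (le_max_right _ _)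
  have hbC : (C + 1) / Ap ≤ b := le_trans (le_max_right _ _) (le_max_right _ _)
  have hb0 : 0 < b := hRp.trans hbRp
  have hbRsub : 0 < b - Rp := sub_pos.2 hbRp
  have hφb : 0 < φ b := by
    rw [hφ b hbRp]
    have hbase : Rm * b / (b - Rp) ≤ max (2 * Rm) 1 := by
      refine le_trans ?_ (le_max_left _ _)
      rw [div_le_iff₀ hbRsub]
      nlinarith
    have hbpos : 0 ≤ Rm * b / (b - Rp) := by positivity
    have h2 : Am * (Rm * b / (b - Rp)) ^ γm ≤ C := by
      exact mul_le_mul_of_nonneg_left (Real.rpow_le_rpow hbpos hbase hγm0.le) hAm.le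
    have h1 : C + 1 ≤ Ap * b ^ γp := by
      have hbb : b ≤ b ^ γp := by
        calc b = b ^ (1:ℝ) := (Real.rpow_one b).symm
          _ ≤ b ^ γp := Real.rpow_le_rpow_of_exponent_le hb1 hγp
      have : C + 1 ≤ Ap * b := by rw [div_le_iff₀ hAp] at hbC; linarith
      nlinarith
    linarith
  -- a < b
  have hab : a < b := by
    by_contra h
    push_neg at h
    rcases eq_or_lt_of_le h with h | h
    · rw [h] at hφb; linarith
    · have := hmono hbRp haR h; linarith
  -- continuity on Icc a b
  have hsub : Set.Icc a b ⊆ Set.Ioi Rp := fun x hx => lt_of_lt_of_le haR hx.1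
  have hcont : ContinuousOn φ (Set.Icc a b) := by
    have hc1 : ContinuousOn (fun ρ : ℝ => Ap * ρ ^ γp - Am * (Rm * ρ / (ρ - Rp)) ^ γm)
        (Set.Icc a b) := by
      apply ContinuousOn.sub
      · apply ContinuousOn.mul continuousOn_const
        exact fun x hx => (Real.continuousAt_rpow_const x γp (Or.inr hγp0.le)).continuousWithinAt
      · apply ContinuousOn.mul continuousOn_const
        apply ContinuousOn.rpow_const
        · apply ContinuousOn.div
          · exact (continuous_const.mul continuous_id).continuousOn
          · exact (continuous_id.sub continuous_const).continuousOn
          · intro x hx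
            have := hsub hx
            rw [Set.mem_Ioi] at this
            exact ne_of_gt (sub_pos.2 this)
        · intro x hx; exact Or.inr hγm0.le
    exact hc1.congr fun x hx => hφ x (hsub hx)
  obtain ⟨c, hc, hφc⟩ := intermediate_value_Icc hab.le hcont
      (Set.mem_Icc.2 ⟨le_of_lt hφa, le_of_lt hφb⟩)
  have hcIoi : c ∈ Set.Ioi Rp := hsub hc
  exact ⟨c, ⟨hcIoi, hφc⟩, fun y hy => hmono.injOn hy.1 hcIoi (by rw [hy.2, hφc])⟩
end

section
/- There exist constants η > 0 and c > 0 such that for every r with 0 < r ≤ η, every complex root λ of the characteristic polynomial det(λ I − A₁(r)) satisfies Re λ ≤ −c r². -/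
open Matrix

theorem det_fin_four'' {R : Type*} [CommRing R] (M : Matrix (Fin 4) (Fin 4) R) :
    M.det = M 0 0 * (M 1 1 * (M 2 2 * M 3 3 - M 2 3 * M 3 2) - M 1 2 * (M 2 1 * M 3 3 - M 2 3 * M 3 1) + M 1 3 * (M 2 1 * M 3 2 - M 2 2 * M 3 1))
      - M 0 1 * (M 1 0 * (M 2 2 * M 3 3 - M 2 3 * M 3 2) - M 1 2 * (M 2 0 * M 3 3 - M 2 3 * M 3 0) + M 1 3 * (M 2 0 * M 3 2 - M 2 2 * M 3 0))
      + M 0 2 * (M 1 0 * (M 2 1 * M 3 3 - M 2 3 * M 3 1) - M 1 1 * (M 2 0 * M 3 3 - M 2 3 * M 3 0) + M 1 3 * (M 2 0 * M 3 1 - M 2 1 * M 3 0))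
      - M 0 3 * (M 1 0 * (M 2 1 * M 3 2 - M 2 2 * M 3 1) - M 1 1 * (M 2 0 * M 3 2 - M 2 2 * M 3 0) + M 1 2 * (M 2 0 * M 3 1 - M 2 1 * M 3 0)) := by
  simp [Matrix.det_succ_row_zero, Fin.sum_univ_succ,
    show (Fin.succ 2 : Fin 4) = 3 from rfl,
    show Fin.succAbove (1 : Fin 4) 2 = 3 from rfl,
    show Fin.succAbove (2 : Fin 4) 2 = 3 from rfl,
    show Fin.succAbove (3 : Fin 4) 2 = 2 from rfl,
    show Fin.castSucc (2 : Fin 3) = 2 from rfl]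
  ring

theorem quad_root_re' (p q : ℝ) (hp : 0 ≤ p) (hq : 0 ≤ q) (z : ℂ)
    (h : z ^ 2 + (p : ℂ) * z + (q : ℂ) = 0) : z.re ≤ 0 := by
  have hre : z.re ^ 2 - z.im ^ 2 + p * z.re + q = 0 := by
    have := congrArg Complex.re h
    simp [pow_two, Complex.add_re, Complex.mul_re, Complex.ofReal_re, Complex.ofReal_im] at this
    nlinarith [this]
  have him : z.im * (2 * z.re + p) = 0 := by
    have := congrArg Complex.im h
    simp [pow_two, Complex.add_im, Complex.mul_im, Complex.ofReal_re, Complex.ofReal_im] at this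
    nlinarith [this]
  rcases mul_eq_zero.mp him with h0 | h0
  · nlinarith [sq_nonneg z.re, h0]
  · nlinarith

theorem depressed_factor' (P Q R : ℝ) :
    ∃ U v w : ℝ, 0 ≤ U ∧ v + w - U ^ 2 = P ∧ U * (w - v) = Q ∧ v * w = R := by
  by_cases hQ : Q = 0
  · subst hQ
    by_cases hD : 4 * R ≤ P ^ 2
    · refine ⟨0, (P - Real.sqrt (P ^ 2 - 4 * R)) / 2, (P + Real.sqrt (P ^ 2 - 4 * R)) / 2,
        le_refl 0, by ring, by ring, ?_⟩
      have h1 : 0 ≤ P ^ 2 - 4 * R := by linarith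
      have h2 : Real.sqrt (P ^ 2 - 4 * R) ^ 2 = P ^ 2 - 4 * R := Real.sq_sqrt h1
      nlinarith [h2]
    · push_neg at hD
      have hR : 0 < R := by nlinarith [sq_nonneg P]
      have hsR : Real.sqrt R ^ 2 = R := Real.sq_sqrt hR.le
      have hsRpos : 0 < Real.sqrt R := Real.sqrt_pos.mpr hR
      have hP2 : P < 2 * Real.sqrt R := by nlinarith
      have hU2 : Real.sqrt (2 * Real.sqrt R - P) ^ 2 = 2 * Real.sqrt R - P :=
        Real.sq_sqrt (by linarith)
      refine ⟨Real.sqrt (2 * Real.sqrt R - P), Real.sqrt R, Real.sqrt R,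
        Real.sqrt_nonneg _, by nlinarith, by ring, by nlinarith⟩
  · set M : ℝ := 1 + 2 * |P| + |P ^ 2 - 4 * R| + Q ^ 2 with hM
    set f : ℝ → ℝ := fun u => u ^ 3 + 2 * P * u ^ 2 + (P ^ 2 - 4 * R) * u - Q ^ 2 with hf
    have hcont : ContinuousOn f (Set.Icc 0 M) := by fun_prop
    have hM1 : 1 ≤ M := by
      rw [hM]; nlinarith [abs_nonneg P, abs_nonneg (P ^ 2 - 4 * R), sq_nonneg Q]
    have hfM : 0 ≤ f M := by
      simp only [hf]
      nlinarith [abs_nonneg P, abs_nonneg (P ^ 2 - 4 * R), sq_nonneg Q, sq_nonneg M,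
        neg_abs_le P, neg_abs_le (P ^ 2 - 4 * R), le_abs_self P, le_abs_self (P ^ 2 - 4 * R)]
    have hf0 : f 0 < 0 := by
      simp only [hf]
      have : Q ^ 2 > 0 := by positivity
      nlinarith
    have hmem : (0 : ℝ) ∈ Set.Icc (f 0) (f M) := ⟨hf0.le, hfM⟩
    obtain ⟨u, hu, hfu⟩ := intermediate_value_Icc (by positivity : (0:ℝ) ≤ M) hcont hmem
    have hune : u ≠ 0 := by
      intro h; rw [h] at hfu; exact absurd hfu hf0.ne
    have hupos : 0 < u := lt_of_le_of_ne hu.1 (Ne.symm hune)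
    have h7 : Real.sqrt u * Real.sqrt u = u := Real.mul_self_sqrt hupos.le
    have hUne : Real.sqrt u ≠ 0 := by positivity
    have hQu : Q ^ 2 = u ^ 3 + 2 * P * u ^ 2 + (P ^ 2 - 4 * R) * u := by
      have : f u = 0 := hfu
      simp only [hf] at this
      linarith
    refine ⟨Real.sqrt u, (P + u - Q / Real.sqrt u) / 2, (P + u + Q / Real.sqrt u) / 2,
      Real.sqrt_nonneg _, by rw [pow_two, h7]; ring, ?_, ?_⟩
    · field_simp; ring
    · field_simp
      nlinarith [hQu, h7, hupos]

theorem quartic_factor' (a b c d : ℝ) :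
    ∃ p q s t : ℝ, p + s = a ∧ p * s + q + t = b ∧ p * t + q * s = c ∧ q * t = d := by
  obtain ⟨U, v, w, hU, h1, h2, h3⟩ :=
    depressed_factor' (b - 3 * a ^ 2 / 8) (c - a * b / 2 + a ^ 3 / 8)
      (d - a * c / 4 + a ^ 2 * b / 16 - 3 * a ^ 4 / 256)
  refine ⟨U + a / 2, v + U * a / 4 + a ^ 2 / 16, -U + a / 2, w - U * a / 4 + a ^ 2 / 16,
    by ring, by linear_combination h1, by linear_combination h2 + (a / 2) * h1,
    by linear_combination h3 + (a ^ 2 / 16) * h1 + (a / 4) * h2⟩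

theorem hurwitz_quartic' (a b c d : ℝ) (ha : 0 < a) (hc : 0 < c) (hd : 0 < d)
    (hb : a ^ 2 < 4 * b) (h3 : 0 < c * (a * b - c) - a ^ 2 * d) (z : ℂ)
    (hz : z ^ 4 + (a : ℂ) * z ^ 3 + (b : ℂ) * z ^ 2 + (c : ℂ) * z + (d : ℂ) = 0) :
    z.re ≤ 0 := by
  obtain ⟨p, q, s, t, e1, e2, e3, e4⟩ := quartic_factor' a b c d
  have hqt : 0 < q * t := e4 ▸ hd
  have hq : 0 < q := by
    rcases lt_or_ge 0 q with h | h
    · exact h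
    · exfalso
      have hq0 : q ≠ 0 := by rintro rfl; simp at hqt
      have hqneg : q < 0 := lt_of_le_of_ne h hq0
      have htneg : t < 0 := by nlinarith
      have hps : b < p * s := by nlinarith
      nlinarith [sq_nonneg (p - s)]
  have ht : 0 < t := by nlinarith
  have key : c * (a * b - c) - a ^ 2 * d = p * s * ((q - t) ^ 2 + c * a) := by
    rw [← e1, ← e2, ← e3, ← e4]; ring
  have hps : 0 < p * s := by
    by_contra hle
    push_neg at hle
    nlinarith [sq_nonneg (q - t), mul_pos hc ha]
  have hp : 0 < p := by
    rcases lt_or_ge 0 p with h | h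
    · exact h
    · exfalso; nlinarith
  have hs : 0 < s := by nlinarith
  have efac : (z ^ 2 + (p : ℂ) * z + (q : ℂ)) * (z ^ 2 + (s : ℂ) * z + (t : ℂ)) = 0 := by
    rw [← hz]
    have c1 : ((p : ℂ) + s) = (a : ℂ) := by exact_mod_cast congrArg Complex.ofReal e1
    have c2 : ((p : ℂ) * s + q + t) = (b : ℂ) := by exact_mod_cast congrArg Complex.ofReal e2
    have c3 : ((p : ℂ) * t + q * s) = (c : ℂ) := by exact_mod_cast congrArg Complex.ofReal e3
    have c4 : ((q : ℂ) * t) = (d : ℂ) := by exact_mod_cast congrArg Complex.ofReal e4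
    linear_combination z ^ 3 * c1 + z ^ 2 * c2 + z * c3 + c4
  rcases mul_eq_zero.mp efac with h | h
  · exact quad_root_re' p q hp.le hq.le z h
  · exact quad_root_re' s t hs.le ht.le z h

theorem tail_pos1' (k m x : ℝ) (hk : 0 < k) (hx : 0 < x)
    (hxk : x ≤ k / (1 + |m|)) : 0 < k + m * x := by
  have hd : (0 : ℝ) < 1 + |m| := by positivity
  have h1 : x * (1 + |m|) ≤ k := by
    rw [← le_div_iff₀ hd]; exact hxk
  nlinarith [mul_nonneg (by linarith [neg_abs_le m] : (0:ℝ) ≤ m + |m|) hx.le]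

theorem tail_pos2' (k m1 m2 x : ℝ) (hk : 0 < k) (hx : 0 < x) (hx1 : x ≤ 1)
    (hxk : x ≤ k / (1 + |m1| + |m2|)) : 0 < k + m1 * x + m2 * x ^ 2 := by
  have hd : (0 : ℝ) < 1 + |m1| + |m2| := by positivity
  have h1 : x * (1 + |m1| + |m2|) ≤ k := by
    rw [← le_div_iff₀ hd]; exact hxk
  nlinarith [mul_nonneg (by linarith [neg_abs_le m1] : (0:ℝ) ≤ m1 + |m1|) hx.le,
    mul_nonneg (by linarith [neg_abs_le m2] : (0:ℝ) ≤ m2 + |m2|) (sq_nonneg x),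
    mul_nonneg (abs_nonneg m2) (mul_nonneg hx.le (by linarith : (0:ℝ) ≤ 1 - x))]

lemma aux_sq1 (r : ℝ) (h0 : 0 < r) (h1 : r ≤ 1) : r ^ 2 ≤ 1 := by nlinarith

lemma aux_mul2 (K M x : ℝ) (hx : 0 < x) (ht : 0 < K + M * x) :
    0 < K * x ^ 2 + M * x ^ 3 := by nlinarith [mul_pos (mul_pos hx hx) ht]

lemma aux_mul3 (K M x : ℝ) (hx : 0 < x) (ht : 0 < K + M * x) :
    0 < K * x ^ 3 + M * x ^ 4 := by nlinarith [mul_pos (mul_pos (mul_pos hx hx) hx) ht]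

lemma aux_b (Ka B Mb x : ℝ) (hx : 0 < x) (ht : 0 < 4 * B + (4 * Mb - Ka ^ 2) * x) :
    (Ka * x) ^ 2 < 4 * (B * x + Mb * x ^ 2) := by nlinarith [mul_pos hx ht]

lemma aux_kc (G B κ : ℝ) (h : κ * (4 * B) ≤ G) : G / 2 ≤ G - 2 * B * κ := by nlinarith

lemma aux_kd (D G B κ : ℝ) (hB : 0 ≤ B) (h : κ * (2 * G) ≤ D) :
    D / 2 ≤ D - G * κ + B * κ ^ 2 := by nlinarith [mul_nonneg hB (sq_nonneg κ)]

lemma aux_kh (νp νm β₁ β₄ κ : ℝ) (h : κ * (4 * (β₁ + β₄)) ≤ β₁ * νp + β₄ * νm) :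
    (β₁ * νp + β₄ * νm) / 2 ≤
      (νp + νm - 4 * κ) * (β₁ + β₄) - (β₁ * νm + β₄ * νp - 2 * (β₁ + β₄) * κ) := by nlinarith

set_option maxHeartbeats 2000000 in
/-- Uniform strict spectral dissipativity of `A₁(r)` at low frequencies: there exist
`η > 0` and `c > 0` such that for `0 < r ≤ η`, every complex root `λ` of
`det(λI − A₁(r))` satisfies `Re λ ≤ −c r²`. -/
theorem spectral_dissipativity
    (β₁ β₂ β₃ β₄ σp σm νp νm : ℝ)
    (hβ₁ : 0 < β₁) (hβ₂ : 0 < β₂) (hβ₃ : 0 < β₃) (hβ₄ : 0 < β₄)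
    (hσp : 0 < σp) (hσm : 0 < σm) (hνp : 0 < νp) (hνm : 0 < νm)
    (hβ : β₂ = β₃) (hββ : β₁ * β₄ = β₂ ^ 2) :
    ∃ η > 0, ∃ c > 0, ∀ r : ℝ, 0 < r → r ≤ η → ∀ lam : ℂ,
      (lam • (1 : Matrix (Fin 4) (Fin 4) ℂ)
          - (A1 β₁ β₂ β₃ β₄ σp σm νp νm r).map (Complex.ofReal)).det = 0 →
      lam.re ≤ -c * r ^ 2 := by
  subst hβ
  obtain ⟨AA, hAA_def⟩ : ∃ y : ℝ, y = νp + νm := ⟨_, rfl⟩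
  obtain ⟨B, hB_def⟩ : ∃ y : ℝ, y = β₁ + β₄ := ⟨_, rfl⟩
  obtain ⟨G, hG_def⟩ : ∃ y : ℝ, y = β₁ * νm + β₄ * νp := ⟨_, rfl⟩
  obtain ⟨HH, hHH_def⟩ : ∃ y : ℝ, y = β₁ * νp + β₄ * νm := ⟨_, rfl⟩
  obtain ⟨D, hD_def⟩ : ∃ y : ℝ, y = β₁ * σm + β₄ * σp := ⟨_, rfl⟩
  obtain ⟨b4, hb4_def⟩ : ∃ y : ℝ, y = σp + σm + νp * νm := ⟨_, rfl⟩
  obtain ⟨c6, hc6_def⟩ : ∃ y : ℝ, y = σp * νm + σm * νp := ⟨_, rfl⟩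
  have hA : 0 < AA := by rw [hAA_def]; positivity
  have hB : 0 < B := by rw [hB_def]; positivity
  have hG : 0 < G := by rw [hG_def]; positivity
  have hH : 0 < HH := by rw [hHH_def]; positivity
  have hD : 0 < D := by rw [hD_def]; positivity
  obtain ⟨κ, hκ_def⟩ : ∃ y : ℝ,
      y = min (min (G / (4 * B)) (D / (2 * G))) (min (AA / 8) (HH / (4 * B))) := ⟨_, rfl⟩
  have hκ : 0 < κ := by
    rw [hκ_def]
    refine lt_min (lt_min (by positivity) (by positivity)) (lt_min (by positivity) (by positivity))
  have hκ1 : κ ≤ G / (4 * B) := by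
    rw [hκ_def]; exact le_trans (min_le_left _ _) (min_le_left _ _)
  have hκ2 : κ ≤ D / (2 * G) := by
    rw [hκ_def]; exact le_trans (min_le_left _ _) (min_le_right _ _)
  have hκ3 : κ ≤ AA / 8 := by
    rw [hκ_def]; exact le_trans (min_le_right _ _) (min_le_left _ _)
  have hκ4 : κ ≤ HH / (4 * B) := by
    rw [hκ_def]; exact le_trans (min_le_right _ _) (min_le_right _ _)
  have hκ1' : κ * (4 * B) ≤ G := by
    rw [← le_div_iff₀ (by positivity)]; exact hκ1
  have hκ2' : κ * (2 * G) ≤ D := by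
    rw [← le_div_iff₀ (by positivity)]; exact hκ2
  have hκ4' : κ * (4 * B) ≤ HH := by
    rw [← le_div_iff₀ (by positivity)]; exact hκ4
  obtain ⟨Ka, hKa_def⟩ : ∃ y : ℝ, y = AA - 4 * κ := ⟨_, rfl⟩
  obtain ⟨Mb, hMb_def⟩ : ∃ y : ℝ, y = b4 - 3 * AA * κ + 6 * κ ^ 2 := ⟨_, rfl⟩
  obtain ⟨Kc, hKc_def⟩ : ∃ y : ℝ, y = G - 2 * B * κ := ⟨_, rfl⟩
  obtain ⟨Mc, hMc_def⟩ : ∃ y : ℝ, y = c6 - 2 * b4 * κ + 3 * AA * κ ^ 2 - 4 * κ ^ 3 := ⟨_, rfl⟩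
  obtain ⟨Kd, hKd_def⟩ : ∃ y : ℝ, y = D - G * κ + B * κ ^ 2 := ⟨_, rfl⟩
  obtain ⟨Md, hMd_def⟩ : ∃ y : ℝ, y = σp * σm - c6 * κ + b4 * κ ^ 2 - AA * κ ^ 3 + κ ^ 4 := ⟨_, rfl⟩
  obtain ⟨Kh, hKh_def⟩ : ∃ y : ℝ, y = Ka * B - Kc := ⟨_, rfl⟩
  obtain ⟨Mh, hMh_def⟩ : ∃ y : ℝ, y = Ka * Mb - Mc := ⟨_, rfl⟩
  obtain ⟨m1, hm1_def⟩ : ∃ y : ℝ, y = Kc * Mh + Mc * Kh - Ka ^ 2 * Kd := ⟨_, rfl⟩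
  obtain ⟨m2, hm2_def⟩ : ∃ y : ℝ, y = Mc * Mh - Ka ^ 2 * Md := ⟨_, rfl⟩
  have hKa : AA / 2 ≤ Ka := by rw [hKa_def]; linarith
  have hKapos : 0 < Ka := by linarith
  have hKc : G / 2 ≤ Kc := by rw [hKc_def]; exact aux_kc G B κ hκ1'
  have hKcpos : 0 < Kc := by linarith
  have hKd : D / 2 ≤ Kd := by
    rw [hKd_def]
    exact aux_kd D G B κ hB.le hκ2'
  have hKdpos : 0 < Kd := by linarith
  have hKh : HH / 2 ≤ Kh := by
    have h4 := hκ4'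
    rw [hB_def, hHH_def] at h4
    have := aux_kh νp νm β₁ β₄ κ h4
    rw [hKh_def, hKa_def, hKc_def, hAA_def, hB_def, hG_def, hHH_def]
    linarith [this]
  have hKhpos : 0 < Kh := by linarith
  obtain ⟨e1, he1_def⟩ : ∃ y : ℝ, y = 4 * B / (1 + |4 * Mb - Ka ^ 2|) := ⟨_, rfl⟩
  obtain ⟨e2, he2_def⟩ : ∃ y : ℝ, y = Kc / (1 + |Mc|) := ⟨_, rfl⟩
  obtain ⟨e3, he3_def⟩ : ∃ y : ℝ, y = Kd / (1 + |Md|) := ⟨_, rfl⟩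
  obtain ⟨e4, he4_def⟩ : ∃ y : ℝ, y = Kc * Kh / (1 + |m1| + |m2|) := ⟨_, rfl⟩
  have he1 : 0 < e1 := by
    rw [he1_def]; exact div_pos (by linarith) (by positivity)
  have he2 : 0 < e2 := by
    rw [he2_def]; exact div_pos hKcpos (by positivity)
  have he3 : 0 < e3 := by
    rw [he3_def]; exact div_pos hKdpos (by positivity)
  have he4 : 0 < e4 := by
    rw [he4_def]; exact div_pos (mul_pos hKcpos hKhpos) (by positivity)
  obtain ⟨η, hη_def⟩ : ∃ y : ℝ,
      y = min 1 (min (Real.sqrt e1) (min (Real.sqrt e2) (min (Real.sqrt e3) (Real.sqrt e4))))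
    := ⟨_, rfl⟩
  have hηpos : 0 < η := by
    rw [hη_def]
    refine lt_min one_pos (lt_min (Real.sqrt_pos.mpr he1)
      (lt_min (Real.sqrt_pos.mpr he2) (lt_min (Real.sqrt_pos.mpr he3) (Real.sqrt_pos.mpr he4))))
  refine ⟨η, hηpos, κ, hκ, ?_⟩
  intro r hr hrη lam hdet
  obtain ⟨x, hx_def⟩ : ∃ y : ℝ, y = r ^ 2 := ⟨_, rfl⟩
  have hx : 0 < x := by rw [hx_def]; positivity
  have hsq : ∀ e : ℝ, 0 < e → η ≤ Real.sqrt e → x ≤ e := by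
    intro e he hle
    have h1 : r ≤ Real.sqrt e := le_trans hrη hle
    have h2 := pow_le_pow_left₀ hr.le h1 2
    rw [Real.sq_sqrt he.le] at h2
    rw [hx_def]; exact h2
  have hx1 : x ≤ 1 := by
    have h1 : r ≤ 1 := le_trans hrη (by rw [hη_def]; exact min_le_left _ _)
    rw [hx_def]; exact aux_sq1 r hr h1
  have hxe1 : x ≤ e1 := hsq e1 he1 (by
    rw [hη_def]; exact le_trans (min_le_right _ _) (min_le_left _ _))
  have hxe2 : x ≤ e2 := hsq e2 he2 (by
    rw [hη_def]
    exact le_trans (min_le_right _ _) (le_trans (min_le_right _ _) (min_le_left _ _)))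
  have hxe3 : x ≤ e3 := hsq e3 he3 (by
    rw [hη_def]
    exact le_trans (min_le_right _ _) (le_trans (min_le_right _ _)
      (le_trans (min_le_right _ _) (min_le_left _ _))))
  have hxe4 : x ≤ e4 := hsq e4 he4 (by
    rw [hη_def]
    exact le_trans (min_le_right _ _) (le_trans (min_le_right _ _)
      (le_trans (min_le_right _ _) (min_le_right _ _))))
  -- the characteristic polynomial
  rw [det_fin_four''] at hdet
  simp [A1, Matrix.smul_apply, Matrix.sub_apply, Matrix.map_apply, Matrix.one_apply,
    Matrix.vecHead, Matrix.vecTail, Function.comp] at hdet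
  have hbb : (β₁ : ℂ) * β₄ = (β₂ : ℂ) ^ 2 := by exact_mod_cast hββ
  have hq : lam ^ 4 + ((νp + νm) * r ^ 2 : ℝ) * lam ^ 3
      + (((β₁ + β₄) * r ^ 2 + (σp + σm + νp * νm) * r ^ 4 : ℝ)) * lam ^ 2
      + (((β₁ * νm + β₄ * νp) * r ^ 4 + (σp * νm + σm * νp) * r ^ 6 : ℝ)) * lam
      + (((β₁ * σm + β₄ * σp) * r ^ 6 + σp * σm * r ^ 8 : ℝ)) = 0 := by
    push_cast
    linear_combination hdet - (r : ℂ) ^ 4 * hbb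
  push_cast at hq
  -- conditions for the shifted polynomial
  have ha' : 0 < Ka * x := mul_pos hKapos hx
  have hb' : (Ka * x) ^ 2 < 4 * (B * x + Mb * x ^ 2) := by
    have t := tail_pos1' (4 * B) (4 * Mb - Ka ^ 2) x (by linarith) hx
      (by rw [← he1_def]; exact hxe1)
    exact aux_b Ka B Mb x hx t
  have hc' : 0 < Kc * x ^ 2 + Mc * x ^ 3 := by
    have t := tail_pos1' Kc Mc x hKcpos hx (by rw [← he2_def]; exact hxe2)
    exact aux_mul2 Kc Mc x hx t
  have hd' : 0 < Kd * x ^ 3 + Md * x ^ 4 := by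
    have t := tail_pos1' Kd Md x hKdpos hx (by rw [← he3_def]; exact hxe3)
    exact aux_mul3 Kd Md x hx t
  have h3' : 0 < (Kc * x ^ 2 + Mc * x ^ 3) * ((Ka * x) * (B * x + Mb * x ^ 2)
      - (Kc * x ^ 2 + Mc * x ^ 3)) - (Ka * x) ^ 2 * (Kd * x ^ 3 + Md * x ^ 4) := by
    have t := tail_pos2' (Kc * Kh) m1 m2 x (mul_pos hKcpos hKhpos) hx hx1
      (by rw [← he4_def]; exact hxe4)
    have heq : (Kc * x ^ 2 + Mc * x ^ 3) * ((Ka * x) * (B * x + Mb * x ^ 2)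
        - (Kc * x ^ 2 + Mc * x ^ 3)) - (Ka * x) ^ 2 * (Kd * x ^ 3 + Md * x ^ 4)
        = x ^ 4 * (Kc * Kh + m1 * x + m2 * x ^ 2) := by
      rw [hm1_def, hm2_def, hKh_def, hMh_def]; ring
    rw [heq]
    exact mul_pos (pow_pos hx 4) t
  -- apply the Hurwitz criterion to the shifted polynomial
  have hzeq : (lam + ((κ * x : ℝ) : ℂ)) ^ 4 + ((Ka * x : ℝ) : ℂ) * (lam + ((κ * x : ℝ) : ℂ)) ^ 3
      + ((B * x + Mb * x ^ 2 : ℝ) : ℂ) * (lam + ((κ * x : ℝ) : ℂ)) ^ 2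
      + ((Kc * x ^ 2 + Mc * x ^ 3 : ℝ) : ℂ) * (lam + ((κ * x : ℝ) : ℂ))
      + ((Kd * x ^ 3 + Md * x ^ 4 : ℝ) : ℂ) = 0 := by
    rw [hKa_def, hMb_def, hKc_def, hMc_def, hKd_def, hMd_def, hAA_def, hB_def, hG_def,
      hD_def, hb4_def, hc6_def, hx_def]
    push_cast
    linear_combination hq
  have hre := hurwitz_quartic' (Ka * x) (B * x + Mb * x ^ 2) (Kc * x ^ 2 + Mc * x ^ 3)
    (Kd * x ^ 3 + Md * x ^ 4) ha' hc' hd' hb' h3' (lam + ((κ * x : ℝ) : ℂ)) hzeq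
  have hfin : lam.re + κ * x ≤ 0 := by
    simpa [Complex.add_re, Complex.ofReal_re] using hre
  rw [hx_def] at hfin
  linarith
end
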